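/- arXiv:2504.03898 — 3 statements merged into one kernel-verified Lean document; each statement's English description precedes it below -/
import Mathlib

section
/- Fix an integer r ≥ 0. In the ring of formal power series in u with coefficients in the polynomial ring ℤ[s], let F_r(s,u) := Σ_{n≥1} (Σ_{k≥0} L'_{n,k+1}(r) s^k) uⁿ (the inner sum is finite since L'_{n,k+1}(r) = 0 whenever k+1 > 2n−1, for r ≥ 1, and whenever k ≥ 1, for r = 0). Then (1+s)·((1−u)^{r+1} − s(1−u)(1−s²u)^r)·F_r(s,u) = (1−s²u)^{r+1} − (1−u)^{r+1}. -/
open scoped Classical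

/-- A signed permutation of length `n`: a permutation `w` of `ℤ` with
`w(-i) = -w(i)` that fixes every integer of absolute value greater than `n`. -/
def IsSignedPerm (n : ℕ) (w : Equiv.Perm ℤ) : Prop :=
  (∀ i : ℤ, w (-i) = - w i) ∧ ∀ i : ℤ, (n : ℤ) < |i| → w i = i

/-- Membership in `X_n := {w ∈ 𝔅_n : w⁻¹(1) > 0}`. -/
def InXn (n : ℕ) (w : Equiv.Perm ℤ) : Prop :=
  IsSignedPerm n w ∧ 0 < w.symm 1

/-- The type B descent number `des_B(w) = #{i ∈ {0,…,n-1} : w_i > w_{i+1}}`,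
with the convention `w_0 = 0` (automatic, since a signed permutation fixes `0`). -/
noncomputable def desB (n : ℕ) (w : Equiv.Perm ℤ) : ℕ :=
  ((Finset.range n).filter fun i => w ((i : ℤ) + 1) < w (i : ℤ)).card

/-- The flag-excedance `fexc(w) = 2·#{i : w_i > i} + #{i : w_i < 0}`. -/
noncomputable def fexc (n : ℕ) (w : Equiv.Perm ℤ) : ℕ :=
  2 * ((Finset.Icc (1 : ℤ) (n : ℤ)).filter fun i => i < w i).card
    + ((Finset.Icc (1 : ℤ) (n : ℤ)).filter fun i => w i < 0).card

/-- The cyclic successor on `{-n,…,-1,1,…,n}` (with `(-1)⁺ = 1` and `n⁺ = -n`). -/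
def csucc (n : ℕ) (i : ℤ) : ℤ :=
  if i = -1 then 1 else if i = (n : ℤ) then -(n : ℤ) else i + 1

/-- The circular descent set `CDes(w) = {i ∈ {-n,…,-1,1,…,n} : w(i) > w(i⁺)}`. -/
noncomputable def cdesSet (n : ℕ) (w : Equiv.Perm ℤ) : Finset ℤ :=
  (Finset.Icc (-(n : ℤ)) (n : ℤ)).filter fun i => i ≠ 0 ∧ w (csucc n i) < w i

/-- The circular descent number `cdes(w) = |CDes(w)|`. -/
noncomputable def cdes (n : ℕ) (w : Equiv.Perm ℤ) : ℕ := (cdesSet n w).card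

/-- `a ≪ b`: there is a nonzero integer strictly between `a` and `b`. -/
def Lll (a b : ℤ) : Prop := ∃ c : ℤ, c ≠ 0 ∧ a < c ∧ c < b

/-- The big ascent number `basc(w) = |BAsc(w)|`, where `BAsc(w) ⊆ {-1,1,…,n}`:
`-1 ∈ BAsc(w)` iff `w_1 ≥ 2`; for `1 ≤ i ≤ n-1`, `i ∈ BAsc(w)` iff `w_i ≪ w_{i+1}`;
and `n ∈ BAsc(w)` iff `w_n ≤ -2`. -/
noncomputable def basc (n : ℕ) (w : Equiv.Perm ℤ) : ℕ :=
  ((insert (-1 : ℤ) (Finset.Icc (1 : ℤ) (n : ℤ))).filter fun i =>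
    if i = -1 then 2 ≤ w 1
    else if i = (n : ℤ) then w (n : ℤ) ≤ -2
    else Lll (w i) (w (i + 1))).card

/-- `L'_{n,k}(r)`: the number of half-integer points in the `r`-th dilate of the
half-open type C hypersimplex `Δ'_{C_n,k}`, in the `y`-coordinates. -/
noncomputable def Lp (n k r : ℕ) : ℕ :=
  if k = 1 then
    Set.ncard {y : Fin n → ℤ |
      (∀ j, 0 ≤ y j ∧ y j ≤ 2 * (r : ℤ)) ∧ (∀ j : Fin n, (j : ℕ) = 0 → y j ≤ (r : ℤ)) ∧
      0 ≤ ∑ j, y j ∧ ∑ j, y j ≤ (r : ℤ)}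
  else
    Set.ncard {y : Fin n → ℤ |
      (∀ j, 0 ≤ y j ∧ y j ≤ 2 * (r : ℤ)) ∧ (∀ j : Fin n, (j : ℕ) = 0 → y j ≤ (r : ℤ)) ∧
      ((k : ℤ) - 1) * r < ∑ j, y j ∧ ∑ j, y j ≤ (k : ℤ) * r}

/-- `L_{n,k}(r)`: the number of half-integer points in the `r`-th dilate of the
closed type C hypersimplex `Δ_{C_n,k}`, in the `y`-coordinates. -/
noncomputable def Lc (n k r : ℕ) : ℕ :=
  Set.ncard {y : Fin n → ℤ |
    (∀ j, 0 ≤ y j ∧ y j ≤ 2 * (r : ℤ)) ∧ (∀ j : Fin n, (j : ℕ) = 0 → y j ≤ (r : ℤ)) ∧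
    ((k : ℤ) - 1) * r ≤ ∑ j, y j ∧ ∑ j, y j ≤ (k : ℤ) * r}

/-- `ψ_{n,k} = #{w ∈ X_n : basc(w) = k}`. -/
noncomputable def psiN (n k : ℕ) : ℕ :=
  {w : Equiv.Perm ℤ | InXn n w ∧ basc n w = k}.ncard

/-- `ψ_{n,k}` with an integer index (`0` for negative `k`). -/
noncomputable def psiZ (n : ℕ) (k : ℤ) : ℕ :=
  {w : Equiv.Perm ℤ | InXn n w ∧ (basc n w : ℤ) = k}.ncard

/-- `Ψ_{C_n}(t) = Σ_k ψ_{n,k} t^k ∈ ℤ[t]`. -/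
noncomputable def PsiC (n : ℕ) : Polynomial ℤ :=
  ∑ᶠ k : ℕ, (psiN n k : Polynomial ℤ) * Polynomial.X ^ k

/-- `Ψ_{C_n}(t)` with rational coefficients. -/
noncomputable def PsiCQ (n : ℕ) : Polynomial ℚ :=
  ∑ᶠ k : ℕ, (psiN n k : Polynomial ℚ) * Polynomial.X ^ k

/-- The descent number of a permutation of `{1,…,m}`. -/
noncomputable def desA (m : ℕ) (σ : Equiv.Perm (Fin m)) : ℕ :=
  (Finset.univ.filter fun i : Fin m =>
    ∃ h : (i : ℕ) + 1 < m, σ ⟨(i : ℕ) + 1, h⟩ < σ i).card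

/-- The classical (type A) Eulerian polynomial `E_m^A(t) = Σ_{σ ∈ S_m} t^{des σ}`. -/
noncomputable def EulerianA (m : ℕ) : Polynomial ℚ :=
  ∑ σ : Equiv.Perm (Fin m), Polynomial.X ^ desA m σ

/-- The relation `u ⇀ w` on `X_n`. -/
def covRel (n : ℕ) (u w : Equiv.Perm ℤ) : Prop :=
  InXn n u ∧ InXn n w ∧
    ((2 ≤ w 1 ∧ u = w * Equiv.swap (1 : ℤ) (-1)) ∨
     (∃ i : ℤ, 1 ≤ i ∧ i ≤ (n : ℤ) - 1 ∧ Lll (w i) (w (i + 1)) ∧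
        u = w * (Equiv.swap i (i + 1) * Equiv.swap (-i) (-(i + 1)))) ∨
     (w (n : ℤ) ≤ -2 ∧ u = w * Equiv.swap (n : ℤ) (-(n : ℤ))))

/-- The `i`-th coordinate (`1 ≤ i ≤ n`) of the vertex `v^j(w)` (`1 ≤ j ≤ n+1`):
`v^{n+1}_i(w) = #({1,…,i-1} ∩ CDes(w⁻¹))` and `v^j = v^{j+1} + ½ e_{w_j}`. -/
noncomputable def vcoord (n : ℕ) (w : Equiv.Perm ℤ) (j : ℕ) (i : ℕ) : ℚ :=
  ((Finset.Icc (1 : ℤ) ((i : ℤ) - 1) ∩ cdesSet n w.symm).card : ℚ)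
    + (1 / 2) * ∑ m ∈ Finset.Icc (j : ℤ) (n : ℤ),
        (if w m = (i : ℤ) then (1 : ℚ) else if w m = -(i : ℤ) then -1 else 0)

/-- `u` is the image `τ_n(w)`: in window notation `u = 1 w'_1 ⋯ w'_n`, where
`w'_i = w_i + 1` if `w_i > 0` and `w'_i = w_i - 1` if `w_i < 0`. -/
def isTau (n : ℕ) (w u : Equiv.Perm ℤ) : Prop :=
  u 1 = 1 ∧ ∀ i : ℤ, 1 ≤ i → i ≤ (n : ℤ) →
    u (i + 1) = if 0 < w i then w i + 1 else w i - 1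

namespace GFE

open Polynomial Finset

noncomputable def geomP (c : ℕ) : Polynomial ℤ := ∑ j ∈ Finset.range c, Polynomial.X ^ j

noncomputable def Epoly (r ν : ℕ) : Polynomial ℤ := geomP (r+1) * geomP (2*r+1) ^ ν

def kf (r m : ℕ) : ℕ := (m + r - 1) / r

def df (r m : ℕ) : ℕ := kf r m * r - m

lemma kf_spec (r : ℕ) (hr : 0 < r) (m : ℕ) :
    m + df r m = kf r m * r ∧ df r m < r := by
  have h1 : kf r m * r ≤ m + r - 1 := Nat.div_mul_le_self _ _
  have h2 : m + r - 1 < kf r m * r + r := by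
    have ha := Nat.div_add_mod (m + r - 1) r
    have hb := Nat.mod_lt (m + r - 1) hr
    unfold kf
    rw [Nat.mul_comm r ((m + r - 1) / r)] at ha
    omega
  unfold df
  omega

lemma kd_unique (r : ℕ) (hr : 0 < r) {m k d : ℕ} (hd : d < r) (h : m + d = k * r) :
    kf r m = k ∧ df r m = d := by
  obtain ⟨h1, h2⟩ := kf_spec r hr m
  rcases Nat.lt_trichotomy (kf r m) k with hlt | heq | hgt
  · exfalso
    have : kf r m * r + r ≤ k * r := by
      calc kf r m * r + r = (kf r m + 1) * r := by ring
        _ ≤ k * r := Nat.mul_le_mul_right _ hlt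
    omega
  · rw [heq] at h1
    exact ⟨heq, by omega⟩
  · exfalso
    have : k * r + r ≤ kf r m * r := by
      calc k * r + r = (k + 1) * r := by ring
        _ ≤ kf r m * r := Nat.mul_le_mul_right _ hgt
    omega


noncomputable def boxF {n : ℕ} (b : Fin n → ℤ) : Finset (Fin n → ℤ) :=
  Fintype.piFinset fun j => Finset.Icc 0 (b j)

noncomputable def cntb {n : ℕ} (b : Fin n → ℤ) (m : ℤ) : ℕ :=
  ((boxF b).filter fun y => (∑ j, y j) = m).card

lemma cntb_zero (b : Fin 0 → ℤ) (m : ℤ) : cntb b m = if m = 0 then 1 else 0 := by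
  unfold cntb boxF
  rcases eq_or_ne m 0 with h | h <;>
    simp [h, Finset.filter_eq_self, Finset.filter_eq_empty_iff]
  omega

lemma mem_box_iff {n : ℕ} (b : Fin n → ℤ) (y : Fin n → ℤ) :
    y ∈ boxF b ↔ ∀ j, y j ∈ Finset.Icc 0 (b j) := Fintype.mem_piFinset

lemma cntb_succ {n : ℕ} (b : Fin (n+1) → ℤ) (m : ℤ) :
    cntb b m = ∑ v ∈ Finset.Icc (0:ℤ) (b 0), cntb (Fin.tail b) (m - v) := by
  unfold cntb
  rw [Finset.card_eq_sum_card_fiberwise (f := fun y : Fin (n+1) → ℤ => y 0)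
    (t := Finset.Icc (0:ℤ) (b 0))
    (fun y hy => ((mem_box_iff b y).mp (Finset.mem_filter.mp hy).1) 0)]
  refine Finset.sum_congr rfl fun v hv => ?_
  refine Finset.card_bij (fun y _ => Fin.tail y) ?_ ?_ ?_
  · intro y hy
    simp only [Finset.mem_filter] at hy ⊢
    obtain ⟨⟨hbox, hsum⟩, h0⟩ := hy
    rw [mem_box_iff] at hbox
    refine ⟨(mem_box_iff _ _).mpr fun j => hbox j.succ, ?_⟩
    rw [Fin.sum_univ_succ] at hsum
    show (∑ j : Fin n, y j.succ) = m - v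
    omega
  · intro y1 h1 y2 h2 heq
    simp only [Finset.mem_filter] at h1 h2
    funext j
    rcases Fin.eq_zero_or_eq_succ j with rfl | ⟨i, rfl⟩
    · rw [h1.2, h2.2]
    · exact congrFun heq i
  · intro z hz
    simp only [Finset.mem_filter] at hz
    obtain ⟨hbox, hsum⟩ := hz
    rw [mem_box_iff] at hbox
    have hmem : Fin.cons v z ∈ Finset.filter (fun y : Fin (n+1) → ℤ => y 0 = v)
        (Finset.filter (fun y => ∑ j, y j = m) (boxF b)) := by
      simp only [Finset.mem_filter]
      refine ⟨⟨(mem_box_iff _ _).mpr ?_, ?_⟩, rfl⟩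
      · intro j
        rcases Fin.eq_zero_or_eq_succ j with rfl | ⟨i, rfl⟩
        · exact hv
        · exact hbox i
      · rw [Fin.sum_univ_succ]
        simp only [Fin.cons_zero, Fin.cons_succ]
        have : (∑ j : Fin n, z j) = m - v := hsum
        omega
    exact ⟨Fin.cons v z, hmem, by simp⟩

def ic (f : Polynomial ℤ) (m : ℤ) : ℤ := if 0 ≤ m then f.coeff m.toNat else 0

lemma ic_X_pow_mul (j : ℕ) (f : Polynomial ℤ) (m : ℤ) :
    ic (Polynomial.X ^ j * f) m = ic f (m - j) := by
  unfold ic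
  rw [mul_comm, Polynomial.coeff_mul_X_pow']
  rcases le_or_gt 0 m with hm | hm
  · rcases le_or_gt (j : ℤ) m with hj | hj
    · rw [if_pos hm, if_pos (by omega), if_pos (by omega)]
      congr 1
      omega
    · rw [if_pos hm, if_neg (by omega), if_neg (by omega)]
  · rw [if_neg (by omega), if_neg (by omega)]

lemma ic_sum {ι : Type*} (s : Finset ι) (g : ι → Polynomial ℤ) (m : ℤ) :
    ic (∑ i ∈ s, g i) m = ∑ i ∈ s, ic (g i) m := by
  unfold ic
  split <;> simp [Polynomial.finset_sum_coeff]

lemma ic_geom_mul (c : ℕ) (f : Polynomial ℤ) (m : ℤ) :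
    ic (geomP c * f) m = ∑ j ∈ Finset.range c, ic f (m - j) := by
  rw [geomP, Finset.sum_mul, ic_sum]
  exact Finset.sum_congr rfl fun j _ => ic_X_pow_mul j f m

lemma sum_Icc_int (c : ℕ) (g : ℤ → ℤ) :
    ∑ v ∈ Finset.Icc (0:ℤ) (c : ℤ), g v = ∑ j ∈ Finset.range (c+1), g (j : ℤ) := by
  refine Finset.sum_nbij' (i := fun v => v.toNat) (j := fun j => (j : ℤ)) ?_ ?_ ?_ ?_ ?_
  · intro v hv
    simp only [Finset.mem_Icc] at hv
    simp only [Finset.mem_range]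
    omega
  · intro j hj
    simp only [Finset.mem_range] at hj
    simp only [Finset.mem_Icc]
    omega
  · intro v hv
    simp only [Finset.mem_Icc] at hv
    exact Int.toNat_of_nonneg hv.1
  · intro j hj
    simp
  · intro v hv
    simp only [Finset.mem_Icc] at hv
    have h' : ((v.toNat : ℤ)) = v := Int.toNat_of_nonneg hv.1
    simp [h']

def bndF (r n : ℕ) : Fin n → ℤ := fun j => if (j : ℕ) = 0 then (r : ℤ) else 2*r

lemma cnt_unif (r : ℕ) : ∀ n, ∀ m : ℤ,
    ((cntb (fun _ : Fin n => (2*(r:ℤ))) m : ℤ)) = ic (geomP (2*r+1) ^ n) m := by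
  intro n
  induction n with
  | zero =>
      intro m
      rw [cntb_zero, pow_zero]
      unfold ic
      rcases eq_or_ne m 0 with h | h
      · simp [h]
      · rw [if_neg h]
        by_cases hm : 0 ≤ m
        · rw [if_pos hm]
          simp [Polynomial.coeff_one, show m.toNat ≠ 0 by omega]
        · rw [if_neg hm]
          simp
  | succ n ih =>
      intro m
      rw [cntb_succ]
      have htail : Fin.tail (fun _ : Fin (n+1) => (2*(r:ℤ))) = fun _ : Fin n => (2*(r:ℤ)) := rfl
      rw [htail]
      rw [pow_succ, mul_comm (geomP (2*r+1) ^ n) (geomP (2*r+1)), ic_geom_mul]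
      rw [show ((2*(r:ℤ))) = ((2*r : ℕ) : ℤ) by push_cast; ring, Nat.cast_sum]
      rw [sum_Icc_int (2*r) (fun v => (cntb (fun _ : Fin n => (((2*r:ℕ):ℤ))) (m - v) : ℤ))]
      refine Finset.sum_congr rfl fun j _ => ?_
      rw [show (((2*r:ℕ):ℤ)) = 2*(r:ℤ) by push_cast; ring]
      exact ih (m - j)

lemma cnt_main (r ν : ℕ) (m : ℤ) :
    ((cntb (bndF r (ν+1)) m : ℤ)) = ic (Epoly r ν) m := by
  rw [cntb_succ]
  have htail : Fin.tail (bndF r (ν+1)) = fun _ : Fin ν => (2*(r:ℤ)) := by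
    funext j
    show bndF r (ν+1) j.succ = _
    simp [bndF, Fin.val_succ]
  have h0 : bndF r (ν+1) 0 = (r : ℤ) := by simp [bndF]
  rw [htail, h0, Epoly, ic_geom_mul, Nat.cast_sum]
  rw [sum_Icc_int r (fun v => (cntb (fun _ : Fin ν => (2*(r:ℤ))) (m - v) : ℤ))]
  exact Finset.sum_congr rfl fun j _ => cnt_unif r ν (m - j)

lemma window_card (r n : ℕ) (W : Finset ℤ) (P : ℤ → Prop)
    (hP : ∀ m, P m ↔ m ∈ W) :
    {y : Fin n → ℤ |
      (∀ j, 0 ≤ y j ∧ y j ≤ 2 * (r : ℤ)) ∧ (∀ j : Fin n, (j : ℕ) = 0 → y j ≤ (r : ℤ)) ∧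
      P (∑ j, y j)}.ncard = ∑ m ∈ W, cntb (bndF r n) m := by
  have hset : {y : Fin n → ℤ |
      (∀ j, 0 ≤ y j ∧ y j ≤ 2 * (r : ℤ)) ∧ (∀ j : Fin n, (j : ℕ) = 0 → y j ≤ (r : ℤ)) ∧
      P (∑ j, y j)} = ↑((boxF (bndF r n)).filter fun y => P (∑ j, y j)) := by
    ext y
    simp only [Set.mem_setOf_eq, Finset.coe_filter, Set.mem_setOf_eq, Finset.mem_coe]
    constructor
    · rintro ⟨h1, h2, h3⟩
      refine ⟨(mem_box_iff _ _).mpr fun j => ?_, h3⟩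
      simp only [Finset.mem_Icc, bndF]
      rcases eq_or_ne ((j:ℕ)) 0 with h0 | h0
      · rw [if_pos h0]
        exact ⟨(h1 j).1, h2 j h0⟩
      · rw [if_neg h0]
        exact h1 j
    · rintro ⟨hbox, h3⟩
      rw [mem_box_iff] at hbox
      refine ⟨fun j => ?_, fun j hj => ?_, h3⟩
      · have := hbox j
        simp only [Finset.mem_Icc, bndF] at this
        rcases eq_or_ne ((j:ℕ)) 0 with h0 | h0
        · rw [if_pos h0] at this
          refine ⟨this.1, le_trans this.2 ?_⟩
          have : (0:ℤ) ≤ r := Int.natCast_nonneg r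
          omega
        · rw [if_neg h0] at this
          exact this
      · have := hbox j
        simp only [Finset.mem_Icc, bndF, if_pos hj] at this
        exact this.2
  rw [hset, Set.ncard_coe_finset]
  rw [Finset.card_eq_sum_card_fiberwise (f := fun y : Fin n → ℤ => ∑ j, y j) (t := W)
    (fun y hy => (hP _).mp (Finset.mem_filter.mp hy).2)]
  refine Finset.sum_congr rfl fun m hm => ?_
  unfold cntb
  congr 1
  ext y
  simp only [Finset.mem_filter]
  constructor
  · rintro ⟨⟨hb, _⟩, hs⟩
    exact ⟨hb, hs⟩
  · rintro ⟨hb, hs⟩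
    exact ⟨⟨hb, (hP _).mpr (hs ▸ hm)⟩, hs⟩

lemma Lp_one (r ν : ℕ) :
    (Lp (ν+1) 1 r : ℤ) = ∑ m ∈ Finset.range (r+1), (Epoly r ν).coeff m := by
  unfold Lp
  rw [if_pos rfl]
  have := window_card r (ν+1) (Finset.Icc (0:ℤ) r) (fun m => 0 ≤ m ∧ m ≤ r)
    (fun m => by simp [Finset.mem_Icc])
  rw [show {y : Fin (ν+1) → ℤ |
      (∀ j, 0 ≤ y j ∧ y j ≤ 2 * (r : ℤ)) ∧ (∀ j : Fin (ν+1), (j : ℕ) = 0 → y j ≤ (r : ℤ)) ∧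
      0 ≤ ∑ j, y j ∧ ∑ j, y j ≤ (r : ℤ)} = {y : Fin (ν+1) → ℤ |
      (∀ j, 0 ≤ y j ∧ y j ≤ 2 * (r : ℤ)) ∧ (∀ j : Fin (ν+1), (j : ℕ) = 0 → y j ≤ (r : ℤ)) ∧
      (fun m => 0 ≤ m ∧ m ≤ (r:ℤ)) (∑ j, y j)} from rfl, this, Nat.cast_sum]
  have h2 : ∀ m ∈ Finset.Icc (0:ℤ) (r:ℤ), ((cntb (bndF r (ν+1)) m : ℤ)) = ic (Epoly r ν) m :=
    fun m _ => cnt_main r ν m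
  rw [Finset.sum_congr rfl h2]
  rw [sum_Icc_int r (fun m => ic (Epoly r ν) m)]
  refine Finset.sum_congr rfl fun j _ => ?_
  unfold ic
  rw [if_pos (by positivity)]
  simp

lemma sum_ic_Ioc (f : Polynomial ℤ) (a b : ℕ) :
    ∑ m ∈ Finset.Ioc ((a:ℤ)) ((b:ℤ)), ic f m = ∑ m ∈ Finset.Ioc a b, f.coeff m := by
  refine Finset.sum_nbij' (i := fun v : ℤ => v.toNat) (j := fun j : ℕ => (j:ℤ)) ?_ ?_ ?_ ?_ ?_
  · intro v hv
    simp only [Finset.mem_Ioc] at hv ⊢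
    omega
  · intro j hj
    simp only [Finset.mem_Ioc] at hj ⊢
    omega
  · intro v hv
    simp only [Finset.mem_Ioc] at hv
    exact Int.toNat_of_nonneg (by omega)
  · intro j hj
    simp
  · intro v hv
    simp only [Finset.mem_Ioc] at hv
    unfold ic
    rw [if_pos (by omega)]

lemma Lp_k (r ν k : ℕ) :
    (Lp (ν+1) (k+2) r : ℤ)
      = ∑ m ∈ Finset.Ioc ((k+1)*r) ((k+2)*r), (Epoly r ν).coeff m := by
  unfold Lp
  rw [if_neg (by omega)]
  have := window_card r (ν+1) (Finset.Ioc (((k+1)*r : ℕ) : ℤ) (((k+2)*r : ℕ) : ℤ))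
    (fun m => (((k+2:ℕ) : ℤ) - 1) * r < m ∧ m ≤ ((k+2:ℕ) : ℤ) * r)
    (fun m => by
      rw [Finset.mem_Ioc]
      push_cast
      have e : ((k:ℤ)+2-1)*(r:ℤ) = ((k:ℤ)+1)*(r:ℤ) := by ring
      rw [e])
  rw [show {y : Fin (ν+1) → ℤ |
      (∀ j, 0 ≤ y j ∧ y j ≤ 2 * (r : ℤ)) ∧ (∀ j : Fin (ν+1), (j : ℕ) = 0 → y j ≤ (r : ℤ)) ∧
      (((k+2:ℕ) : ℤ) - 1) * r < ∑ j, y j ∧ ∑ j, y j ≤ ((k+2:ℕ) : ℤ) * r} = {y : Fin (ν+1) → ℤ |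
      (∀ j, 0 ≤ y j ∧ y j ≤ 2 * (r : ℤ)) ∧ (∀ j : Fin (ν+1), (j : ℕ) = 0 → y j ≤ (r : ℤ)) ∧
      (fun m => (((k+2:ℕ) : ℤ) - 1) * r < m ∧ m ≤ ((k+2:ℕ) : ℤ) * r) (∑ j, y j)} from rfl,
    this, Nat.cast_sum]
  have h2 : ∀ m ∈ Finset.Ioc (((k+1)*r : ℕ) : ℤ) (((k+2)*r : ℕ) : ℤ),
      ((cntb (bndF r (ν+1)) m : ℤ)) = ic (Epoly r ν) m := fun m _ => cnt_main r ν m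
  rw [Finset.sum_congr rfl h2]
  exact sum_ic_Ioc (Epoly r ν) ((k+1)*r) ((k+2)*r)

noncomputable def psi1 (r : ℕ) : Polynomial ℤ →+ Polynomial ℤ :=
  AddMonoidHom.mk' (fun f => f.sum fun m a => Polynomial.C a * Polynomial.X ^ (kf r m))
    (fun f g => Polynomial.sum_add_index f g _ (fun n => by simp)
      (fun n a b => by simp [Polynomial.C_add, add_mul]))

noncomputable def psiT (r : ℕ) : Polynomial ℤ →+ Polynomial (Polynomial ℤ) :=
  AddMonoidHom.mk' (fun f => f.sum fun m a =>
      Polynomial.C (Polynomial.C a * Polynomial.X ^ (kf r m)) * Polynomial.X ^ (df r m))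
    (fun f g => Polynomial.sum_add_index f g _ (fun n => by simp)
      (fun n a b => by simp [Polynomial.C_add, add_mul]))

lemma psi1_monomial (r m : ℕ) (a : ℤ) :
    psi1 r (Polynomial.monomial m a) = Polynomial.C a * Polynomial.X ^ (kf r m) := by
  show (Polynomial.monomial m a).sum (fun m a => Polynomial.C a * Polynomial.X ^ (kf r m)) = _
  rw [Polynomial.sum_monomial_index]
  simp

lemma psiT_monomial (r m : ℕ) (a : ℤ) :
    psiT r (Polynomial.monomial m a)
      = Polynomial.C (Polynomial.C a * Polynomial.X ^ (kf r m)) * Polynomial.X ^ (df r m) := by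
  show (Polynomial.monomial m a).sum (fun m a =>
    Polynomial.C (Polynomial.C a * Polynomial.X ^ (kf r m)) * Polynomial.X ^ (df r m)) = _
  rw [Polynomial.sum_monomial_index]
  simp

lemma FE (r : ℕ) (hr : 0 < r) (f : Polynomial ℤ) :
    (1 - Polynomial.X) * psiT r (f * geomP (2*r+1))
      = (Polynomial.C (1 + Polynomial.X)
          - Polynomial.C (Polynomial.X + Polynomial.X^2) * Polynomial.X^r)
            * Polynomial.C (psi1 r f)
        + (Polynomial.C ((Polynomial.X : Polynomial ℤ)^2) - Polynomial.X) * psiT r f := by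
  induction f using Polynomial.induction_on' with
  | add p q hp hq =>
      simp only [add_mul, map_add, map_one, map_pow, map_mul] at hp hq ⊢
      linear_combination hp + hq
  | monomial m a =>
      have hmul : Polynomial.monomial m a * geomP (2*r+1)
          = ∑ j ∈ Finset.range (2*r+1), Polynomial.monomial (m+j) a := by
        rw [geomP, Finset.mul_sum]
        refine Finset.sum_congr rfl fun j _ => ?_
        rw [Polynomial.X_pow_eq_monomial, Polynomial.monomial_mul_monomial, mul_one]
      rw [hmul, map_sum, Finset.mul_sum]
      obtain ⟨hkd, hdr⟩ := kf_spec r hr m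
      set k := kf r m with hk
      set d := df r m with hd
      set EX : Polynomial (Polynomial ℤ) :=
        Polynomial.C (Polynomial.C a * Polynomial.X ^ k) with hEX
      set G : ℕ → Polynomial (Polynomial ℤ) := fun j =>
        (1 - Polynomial.X) * psiT r (Polynomial.monomial (m+j) a) with hG
      have e1 : (∑ j ∈ Finset.Ico 0 (d+1), G j) + (∑ j ∈ Finset.Ico (d+1) (2*r+1), G j)
          = ∑ j ∈ Finset.Ico 0 (2*r+1), G j :=
        Finset.sum_Ico_consecutive G (by omega) (by omega)
      have e2 : (∑ j ∈ Finset.Ico (d+1) (d+r+1), G j) + (∑ j ∈ Finset.Ico (d+r+1) (2*r+1), G j)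
          = ∑ j ∈ Finset.Ico (d+1) (2*r+1), G j :=
        Finset.sum_Ico_consecutive G (by omega) (by omega)
      have W1 : ∑ j ∈ Finset.Ico 0 (d+1), G j
          = EX * (1 - Polynomial.X^(d+1)) := by
        rw [← Finset.range_eq_Ico]
        have hcong : ∀ j ∈ Finset.range (d+1), G j
            = EX * Polynomial.X^(d+1-(j+1)) - EX * Polynomial.X^(d+1-j) := by
          intro j hj
          rw [Finset.mem_range] at hj
          obtain ⟨hk1, hd1⟩ := kd_unique r hr (m := m + j) (k := k) (d := d - j)
            (by omega) (by omega)
          rw [hG]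
          simp only [psiT_monomial, hk1, hd1]
          have h1 : d+1-(j+1) = d - j := by omega
          have h2 : d+1-j = (d-j)+1 := by omega
          rw [h1, h2, hEX]
          ring
        rw [Finset.sum_congr rfl hcong, Finset.sum_range_sub (fun j => EX * Polynomial.X^(d+1-j))]
        simp only [Nat.sub_self, pow_zero, Nat.sub_zero]
        ring
      have W2 : ∑ j ∈ Finset.Ico (d+1) (d+r+1), G j
          = EX * Polynomial.C (Polynomial.X : Polynomial ℤ) * (1 - Polynomial.X^r) := by
        rw [Finset.sum_Ico_eq_sum_range]
        have hlen : d+r+1-(d+1) = r := by omega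
        rw [hlen]
        set E2 : Polynomial (Polynomial ℤ) := EX * Polynomial.C (Polynomial.X : Polynomial ℤ)
          with hE2
        have hcong : ∀ i ∈ Finset.range r, G (d+1+i)
            = E2 * Polynomial.X^(r-(i+1)) - E2 * Polynomial.X^(r-i) := by
          intro i hi
          rw [Finset.mem_range] at hi
          obtain ⟨hk1, hd1⟩ := kd_unique r hr (m := m + (d+1+i)) (k := k+1) (d := r-(i+1))
            (by omega)
            (by
              have h5 : (k+1)*r = k*r + r := by ring
              omega)
          rw [hG]
          simp only [psiT_monomial, hk1, hd1]
          have h2 : r-i = (r-(i+1))+1 := by omega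
          rw [h2, hE2, hEX, pow_succ]
          simp only [map_mul]
          ring
        rw [Finset.sum_congr rfl hcong, Finset.sum_range_sub (fun i => E2 * Polynomial.X^(r-i))]
        simp only [Nat.sub_self, pow_zero, Nat.sub_zero]
        ring
      have W3 : ∑ j ∈ Finset.Ico (d+r+1) (2*r+1), G j
          = EX * Polynomial.C ((Polynomial.X : Polynomial ℤ)^2)
              * (Polynomial.X^d - Polynomial.X^r) := by
        rw [Finset.sum_Ico_eq_sum_range]
        have hlen : 2*r+1-(d+r+1) = r - d := by omega
        rw [hlen]
        set E3 : Polynomial (Polynomial ℤ) :=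
          EX * Polynomial.C ((Polynomial.X : Polynomial ℤ)^2) with hE3
        have hcong : ∀ i ∈ Finset.range (r-d), G (d+r+1+i)
            = E3 * Polynomial.X^(r-(i+1)) - E3 * Polynomial.X^(r-i) := by
          intro i hi
          rw [Finset.mem_range] at hi
          obtain ⟨hk1, hd1⟩ := kd_unique r hr (m := m + (d+r+1+i)) (k := k+2) (d := r-(i+1))
            (by omega)
            (by
              have h5 : (k+2)*r = k*r + r + r := by ring
              omega)
          rw [hG]
          simp only [psiT_monomial, hk1, hd1]
          have h2 : r-i = (r-(i+1))+1 := by omega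
          rw [h2, hE3, hEX]
          have h3 : (Polynomial.X : Polynomial ℤ)^(k+2) = Polynomial.X^k * Polynomial.X^2 := by
            ring
          rw [h3]
          simp only [map_mul]
          ring
        rw [Finset.sum_congr rfl hcong, Finset.sum_range_sub (fun i => E3 * Polynomial.X^(r-i))]
        have h4 : r - (r-d) = d := by omega
        rw [h4]
        simp only [Nat.sub_zero]
        ring
      simp only [← Finset.range_eq_Ico] at e1 W1
      rw [← e1, ← e2, W1, W2, W3, psi1_monomial, psiT_monomial]
      rw [hEX]
      simp only [map_add, map_mul, map_pow, map_one]
      ring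

lemma geomP_natDegree_le (c : ℕ) : (geomP c).natDegree ≤ c - 1 := by
  unfold geomP
  refine le_trans (Polynomial.natDegree_sum_le _ _) ?_
  rw [Finset.fold_max_le]
  refine ⟨by omega, fun j hj => ?_⟩
  rw [Function.comp, Polynomial.natDegree_X_pow]
  rw [Finset.mem_range] at hj
  omega

lemma Epoly_natDegree_le (r ν : ℕ) : (Epoly r ν).natDegree ≤ (2*ν+1)*r := by
  unfold Epoly
  refine le_trans (Polynomial.natDegree_mul_le) ?_
  have h1 := geomP_natDegree_le (r+1)
  have h2 : ((geomP (2*r+1)) ^ ν).natDegree ≤ ν * (2*r) := by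
    refine le_trans (Polynomial.natDegree_pow_le) ?_
    have := geomP_natDegree_le (2*r+1)
    have : (geomP (2*r+1)).natDegree ≤ 2*r := by omega
    exact Nat.mul_le_mul_left _ this
  have e : (2*ν+1)*r = r + ν*(2*r) := by ring
  omega

lemma Epoly_coeff_zero (r ν : ℕ) : (Epoly r ν).coeff 0 = 1 := by
  have hg : ∀ c : ℕ, 0 < c → (geomP c).coeff 0 = 1 := by
    intro c hc
    unfold geomP
    rw [Polynomial.finset_sum_coeff]
    rw [Finset.sum_eq_single 0]
    · simp
    · intro j _ hj
      rw [Polynomial.coeff_X_pow, if_neg (by omega)]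
    · intro h
      exact absurd (Finset.mem_range.mpr hc) h
  have h2 : ∀ n : ℕ, ((geomP (2*r+1)) ^ n).coeff 0 = 1 := by
    intro n
    induction n with
    | zero => simp
    | succ n ih => rw [pow_succ, Polynomial.mul_coeff_zero, ih, one_mul, hg _ (by omega)]
  unfold Epoly
  rw [Polynomial.mul_coeff_zero, h2, hg _ (by omega), mul_one]

lemma kf_le (r : ℕ) (hr : 0 < r) {m K : ℕ} (hm : m ≤ K * r) : kf r m ≤ K := by
  have h1 : m + r - 1 < (K+1) * r := by
    have : (K+1)*r = K*r + r := by ring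
    omega
  unfold kf
  exact Nat.lt_succ_iff.mp ((Nat.div_lt_iff_lt_mul hr).mpr h1)

lemma kf_fiber (r : ℕ) (hr : 0 < r) (k m : ℕ) :
    kf r m = k + 1 ↔ (k*r < m ∧ m ≤ (k+1)*r) := by
  constructor
  · intro h
    obtain ⟨h1, h2⟩ := kf_spec r hr m
    rw [h] at h1
    have e : (k+1)*r = k*r + r := by ring
    omega
  · intro ⟨h1, h2⟩
    have e : (k+1)*r = k*r + r := by ring
    exact (kd_unique r hr (m := m) (k := k+1) (d := (k+1)*r - m)
      (by omega) (by omega)).1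

lemma kf_zero_iff (r : ℕ) (hr : 0 < r) (m : ℕ) : kf r m = 0 ↔ m = 0 := by
  constructor
  · intro h
    obtain ⟨h1, h2⟩ := kf_spec r hr m
    rw [h, zero_mul] at h1
    omega
  · rintro rfl
    unfold kf
    exact Nat.div_eq_of_lt (by omega)

lemma Lp_vanish (r : ℕ) (hr : 0 < r) (ν k : ℕ) (hk : 2*ν+1 ≤ k) :
    Lp (ν+1) (k+1) r = 0 := by
  have hk1 : 1 ≤ k := by omega
  obtain ⟨k', rfl⟩ : ∃ k', k = k' + 1 := ⟨k - 1, by omega⟩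
  have h := Lp_k r ν k'
  have hz : ∀ m ∈ Finset.Ioc ((k'+1)*r) ((k'+2)*r), (Epoly r ν).coeff m = 0 := by
    intro m hm
    rw [Finset.mem_Ioc] at hm
    refine Polynomial.coeff_eq_zero_of_natDegree_lt ?_
    have hD := Epoly_natDegree_le r ν
    have : (2*ν+1)*r ≤ (k'+1)*r := Nat.mul_le_mul_right _ (by omega)
    omega
  rw [Finset.sum_congr rfl hz, Finset.sum_const_zero] at h
  rw [show k'+1+1 = k'+2 from rfl]
  exact_mod_cast h

lemma comb_main (r : ℕ) (hr : 0 < r) (ν : ℕ) :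
    (Polynomial.X : Polynomial ℤ)
        * (∑ᶠ k : ℕ, (Lp (ν+1) (k+1) r : Polynomial ℤ) * Polynomial.X ^ k)
      = psi1 r (Epoly r ν) + (Polynomial.X - 1) := by
  classical
  set S : ℕ → ℤ := fun k => ∑ m ∈ Finset.Ioc (k*r) ((k+1)*r), (Epoly r ν).coeff m with hS
  -- Lp values
  have hLp1 : (Lp (ν+1) 1 r : ℤ) = 1 + S 0 := by
    rw [Lp_one r ν]
    have hsplit : Finset.range (r+1) = insert 0 (Finset.Ioc 0 r) := by
      ext m
      simp only [Finset.mem_range, Finset.mem_insert, Finset.mem_Ioc]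
      omega
    rw [hsplit, Finset.sum_insert (by simp)]
    rw [Epoly_coeff_zero, hS]
    simp only [zero_mul, one_mul, zero_add]
  have hLpk : ∀ k : ℕ, (Lp (ν+1) (k+2) r : ℤ) = S (k+1) := by
    intro k
    rw [Lp_k r ν k, hS]
  -- finsum to finite sum
  have hfin : (∑ᶠ k : ℕ, (Lp (ν+1) (k+1) r : Polynomial ℤ) * Polynomial.X ^ k)
      = ∑ k ∈ Finset.range (2*ν+1), (Lp (ν+1) (k+1) r : Polynomial ℤ) * Polynomial.X ^ k := by
    refine finsum_eq_sum_of_support_subset _ ?_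
    intro k hk
    simp only [Function.mem_support] at hk
    by_contra hmem
    rw [Finset.coe_range, Set.mem_Iio, not_lt] at hmem
    rw [Lp_vanish r hr ν k (by omega)] at hk
    simp at hk
  rw [hfin]
  -- psi1 as grouped sum
  set D := (2*ν+1)*r with hD
  have hpsi : psi1 r (Epoly r ν)
      = ∑ m ∈ Finset.range (D+1), Polynomial.C ((Epoly r ν).coeff m) * Polynomial.X ^ (kf r m) := by
    show (Epoly r ν).sum (fun m a => Polynomial.C a * Polynomial.X ^ (kf r m)) = _
    refine Polynomial.sum_over_range' _ (fun n => by simp) _ ?_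
    have := Epoly_natDegree_le r ν
    omega
  have hfib : ∑ m ∈ Finset.range (D+1),
        Polynomial.C ((Epoly r ν).coeff m) * Polynomial.X ^ (kf r m)
      = ∑ k ∈ Finset.range (2*ν+2), ∑ m ∈ (Finset.range (D+1)).filter (fun m => kf r m = k),
          Polynomial.C ((Epoly r ν).coeff m) * Polynomial.X ^ k := by
    rw [← Finset.sum_fiberwise_of_maps_to (g := fun m => kf r m)
      (fun m hm => by
        show kf r m ∈ Finset.range (2*ν+2)
        rw [Finset.mem_range] at hm ⊢
        have := kf_le r hr (K := 2*ν+1) (m := m) (by omega)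
        omega)]
    refine Finset.sum_congr rfl fun k _ => Finset.sum_congr rfl fun m hm => ?_
    rw [Finset.mem_filter] at hm
    rw [hm.2]
  have hfib0 : (Finset.range (D+1)).filter (fun m => kf r m = 0) = {0} := by
    ext m
    simp only [Finset.mem_filter, Finset.mem_range, Finset.mem_singleton]
    rw [kf_zero_iff r hr]
    omega
  have hfibk' : ∀ k' < 2*ν+1, (Finset.range (D+1)).filter (fun m => kf r m = k'+1)
      = Finset.Ioc (k'*r) ((k'+1)*r) := by
    intro k' hk'
    ext m
    simp only [Finset.mem_filter, Finset.mem_range, Finset.mem_Ioc]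
    rw [kf_fiber r hr]
    constructor
    · tauto
    · intro h
      refine ⟨?_, h⟩
      have : (k'+1)*r ≤ (2*ν+1)*r := Nat.mul_le_mul_right _ (by omega)
      omega
  rw [hpsi, hfib, Finset.sum_range_succ' (fun k =>
    ∑ m ∈ (Finset.range (D+1)).filter (fun m => kf r m = k),
      Polynomial.C ((Epoly r ν).coeff m) * Polynomial.X ^ k) (2*ν+1)]
  have hstep1 : ∑ k' ∈ Finset.range (2*ν+1),
        (∑ m ∈ (Finset.range (D+1)).filter (fun m => kf r m = k'+1),
          Polynomial.C ((Epoly r ν).coeff m) * Polynomial.X ^ (k'+1))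
      = ∑ k' ∈ Finset.range (2*ν+1), Polynomial.C (S k') * Polynomial.X ^ (k'+1) :=
    Finset.sum_congr rfl (fun k' hk' => by
      rw [hfibk' k' (Finset.mem_range.mp hk'), hS]
      rw [map_sum, Finset.sum_mul])
  have hstep0 : (∑ m ∈ (Finset.range (D+1)).filter (fun m => kf r m = 0),
        Polynomial.C ((Epoly r ν).coeff m) * Polynomial.X ^ (0:ℕ))
      = 1 := by
    rw [hfib0, Finset.sum_singleton, Epoly_coeff_zero]
    simp
  rw [hstep1, hstep0]
  have hstepL : Polynomial.X * (∑ k ∈ Finset.range (2*ν+1),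
        (Lp (ν+1) (k+1) r : Polynomial ℤ) * Polynomial.X ^ k)
      = ∑ k ∈ Finset.range (2*ν+1),
          Polynomial.C ((Lp (ν+1) (k+1) r : ℤ)) * Polynomial.X ^ (k+1) := by
    rw [Finset.mul_sum]
    refine Finset.sum_congr rfl fun k _ => ?_
    rw [show ((Lp (ν+1) (k+1) r : Polynomial ℤ)) = Polynomial.C ((Lp (ν+1) (k+1) r : ℤ)) from
      (map_natCast Polynomial.C _).symm]
    ring
  rw [hstepL]
  rw [Finset.sum_range_succ' (fun k => Polynomial.C ((Lp (ν+1) (k+1) r : ℤ))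
    * Polynomial.X ^ (k+1)) (2*ν)]
  rw [Finset.sum_range_succ' (fun k => Polynomial.C (S k) * Polynomial.X ^ (k+1)) (2*ν)]
  have e1 : ∀ k ∈ Finset.range (2*ν),
      Polynomial.C ((Lp (ν+1) (k+1+1) r : ℤ)) * Polynomial.X ^ (k+1+1)
        = Polynomial.C (S (k+1)) * Polynomial.X ^ (k+1+1) := by
    intro k _
    rw [show k+1+1 = k+2 from rfl, hLpk k]
  rw [Finset.sum_congr rfl e1]
  rw [show (0:ℕ)+1 = 1 from rfl, hLp1, map_add, map_one]
  ring

section PS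

open PowerSeries

local notation "R" => PowerSeries (Polynomial ℤ)

noncomputable def sP : PowerSeries (Polynomial ℤ) := @PowerSeries.C (Polynomial ℤ) _ Polynomial.X

noncomputable def iA : PowerSeries (Polynomial ℤ) := PowerSeries.mk fun _ => 1

lemma hAiA : (1 - PowerSeries.X) * iA = (1 : PowerSeries (Polynomial ℤ)) := by
  ext n
  rw [sub_mul, one_mul, map_sub]
  cases n with
  | zero => simp [iA]
  | succ n => simp [iA, PowerSeries.coeff_succ_X_mul]

noncomputable def tst : PowerSeries (Polynomial ℤ) := (1 - sP^2 * PowerSeries.X) * iA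

noncomputable def eps : Polynomial (Polynomial ℤ) →+* PowerSeries (Polynomial ℤ) :=
  Polynomial.eval₂RingHom (@PowerSeries.C (Polynomial ℤ) _) tst

lemma eps_X : eps Polynomial.X = tst := Polynomial.eval₂_X _ _

lemma eps_C (p : Polynomial ℤ) : eps (Polynomial.C p) = @PowerSeries.C (Polynomial ℤ) _ p :=
  Polynomial.eval₂_C _ _

noncomputable def tauPS (r ν : ℕ) : PowerSeries (Polynomial ℤ) := eps (psiT r (Epoly r ν))

noncomputable def VP (r ν : ℕ) : Polynomial ℤ := psi1 r (Epoly r ν)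

lemma FE_eval (r : ℕ) (hr : 0 < r) (ν : ℕ) :
    (1 - tst) * tauPS r (ν+1)
      = ((1 + sP) - (sP + sP^2) * tst^r) * @PowerSeries.C (Polynomial ℤ) _ (VP r ν)
        + (sP^2 - tst) * tauPS r ν := by
  have hE : Epoly r (ν+1) = Epoly r ν * geomP (2*r+1) := by
    unfold Epoly
    rw [pow_succ]
    ring
  have h := congrArg eps (FE r hr (Epoly r ν))
  rw [← hE] at h
  simp only [map_mul, map_sub, map_add, map_one, map_pow, eps_X, eps_C] at h
  unfold tauPS VP sP
  exact h

lemma step (r : ℕ) (hr : 0 < r) (ν : ℕ) :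
    PowerSeries.X * (sP^2 - 1) * tauPS r (ν+1)
      = ((1 - PowerSeries.X) * ((1 + sP) - (sP + sP^2) * tst^r))
          * @PowerSeries.C (Polynomial ℤ) _ (VP r ν)
        + (sP^2 - 1) * tauPS r ν := by
  have h := FE_eval r hr ν
  have h2 := hAiA
  unfold tst at h ⊢
  set A : PowerSeries (Polynomial ℤ) := 1 - PowerSeries.X with hA
  set B : PowerSeries (Polynomial ℤ) := 1 - sP^2 * PowerSeries.X with hB
  have hBA : PowerSeries.X * (sP^2 - 1) = A - B := by rw [hA, hB]; ring
  have hs2 : sP^2 - 1 = sP^2 * A - B := by rw [hA, hB]; ring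
  linear_combination A * h + (B * tauPS r (ν+1) - B * tauPS r ν) * h2
    + hBA * tauPS r (ν+1) - hs2 * tauPS r ν

lemma tele (r : ℕ) (hr : 0 < r) (N : ℕ) :
    (sP^2 - 1) * (PowerSeries.X^N * tauPS r N - tauPS r 0)
      = ((1 - PowerSeries.X) * ((1 + sP) - (sP + sP^2) * tst^r))
          * ∑ ν ∈ Finset.range N, PowerSeries.X^ν * @PowerSeries.C (Polynomial ℤ) _ (VP r ν) := by
  induction N with
  | zero => simp
  | succ N ih =>
      rw [Finset.sum_range_succ]
      have hst := step r hr N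
      linear_combination ih + PowerSeries.X^N * hst

noncomputable def Vser (r : ℕ) : PowerSeries (Polynomial ℤ) :=
  PowerSeries.mk fun ν => psi1 r (Epoly r ν)

lemma truncdvd (r N : ℕ) :
    (PowerSeries.X : PowerSeries (Polynomial ℤ))^N
      ∣ (Vser r - ∑ ν ∈ Finset.range N, PowerSeries.X^ν * @PowerSeries.C (Polynomial ℤ) _ (VP r ν)) := by
  rw [PowerSeries.X_pow_dvd_iff]
  intro M hM
  rw [map_sub]
  have h1 : (@PowerSeries.coeff (Polynomial ℤ) _ M) (Vser r) = VP r M := by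
    simp [Vser, VP]
  have h2 : (@PowerSeries.coeff (Polynomial ℤ) _ M)
      (∑ ν ∈ Finset.range N, PowerSeries.X^ν * @PowerSeries.C (Polynomial ℤ) _ (VP r ν))
      = VP r M := by
    rw [map_sum]
    rw [Finset.sum_eq_single M]
    · rw [PowerSeries.coeff_X_pow_mul', if_pos le_rfl, Nat.sub_self]
      simp
    · intro ν _ hν
      rw [PowerSeries.coeff_X_pow_mul']
      rcases le_or_gt ν M with h | h
      · rw [if_pos h, PowerSeries.coeff_C, if_neg (by omega)]
      · rw [if_neg (by omega)]
    · intro h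
      exact absurd (Finset.mem_range.mpr hM) h
  rw [h1, h2, sub_self]

lemma master (r : ℕ) (hr : 0 < r) :
    (1 - sP^2) * tauPS r 0
      = ((1 - PowerSeries.X) * ((1 + sP) - (sP + sP^2) * tst^r)) * Vser r := by
  rw [← sub_eq_zero]
  set W0 : PowerSeries (Polynomial ℤ) :=
    (1 - PowerSeries.X) * ((1 + sP) - (sP + sP^2) * tst^r) with hW0
  have hdvd : ∀ N, (PowerSeries.X : PowerSeries (Polynomial ℤ))^N
      ∣ ((1 - sP^2) * tauPS r 0 - W0 * Vser r) := by
    intro N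
    have h1 := tele r hr N
    have h2 := truncdvd r N
    have hrw : (1 - sP^2) * tauPS r 0 - W0 * Vser r
        = -(W0 * (Vser r - ∑ ν ∈ Finset.range N,
              PowerSeries.X^ν * @PowerSeries.C (Polynomial ℤ) _ (VP r ν)))
          - (sP^2 - 1) * (PowerSeries.X^N * tauPS r N) := by
      linear_combination h1
    rw [hrw]
    refine dvd_sub ?_ ?_
    · exact (dvd_neg).mpr (h2.mul_left W0)
    · exact (dvd_mul_right (PowerSeries.X^N) (tauPS r N)).mul_left _
  refine PowerSeries.ext fun M => ?_
  rw [map_zero]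
  exact PowerSeries.X_pow_dvd_iff.mp (hdvd (M+1)) M (by omega)

lemma sF (r : ℕ) (hr : 0 < r) :
    sP * (PowerSeries.mk fun n => if n = 0 then 0 else
        ∑ᶠ k : ℕ, (Lp n (k+1) r : Polynomial ℤ) * Polynomial.X^k)
      = PowerSeries.X * Vser r + (sP - 1) * (PowerSeries.X * iA) := by
  have hC : sP - 1 = @PowerSeries.C (Polynomial ℤ) _ (Polynomial.X - 1) := by
    rw [map_sub, map_one]
    rfl
  refine PowerSeries.ext fun n => ?_
  rw [map_add]
  cases n with
  | zero =>
      rw [hC, show sP = @PowerSeries.C (Polynomial ℤ) _ Polynomial.X from rfl]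
      rw [PowerSeries.coeff_C_mul, PowerSeries.coeff_C_mul]
      simp
  | succ n =>
      rw [hC, show sP = @PowerSeries.C (Polynomial ℤ) _ Polynomial.X from rfl]
      rw [PowerSeries.coeff_C_mul, PowerSeries.coeff_C_mul,
        PowerSeries.coeff_succ_X_mul, PowerSeries.coeff_succ_X_mul]
      simp only [Vser, iA, PowerSeries.coeff_mk, if_neg (Nat.succ_ne_zero n), mul_one]
      exact comb_main r hr n

lemma hAt : (1 - PowerSeries.X) * tst = 1 - sP^2 * PowerSeries.X := by
  unfold tst
  linear_combination (1 - sP^2*PowerSeries.X) * hAiA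

lemma htstd (d : ℕ) : (1 - PowerSeries.X)^d * tst^d = (1 - sP^2 * PowerSeries.X)^d := by
  rw [← mul_pow, hAt]

lemma tau0_eq (r : ℕ) (hr : 0 < r) :
    tauPS r 0 = 1 + sP * ∑ d ∈ Finset.range r, tst^d := by
  have hE0 : Epoly r 0 = ∑ m ∈ Finset.range (r+1), Polynomial.monomial m (1:ℤ) := by
    unfold Epoly geomP
    rw [pow_zero, mul_one]
    exact Finset.sum_congr rfl fun m _ => Polynomial.X_pow_eq_monomial m
  unfold tauPS
  rw [hE0, map_sum, map_sum]
  rw [Finset.sum_range_succ' (fun m => eps (psiT r (Polynomial.monomial m 1))) r]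
  have h0 : eps (psiT r (Polynomial.monomial 0 1)) = 1 := by
    rw [psiT_monomial]
    have hk : kf r 0 = 0 := (kf_zero_iff r hr 0).mpr rfl
    have hdf : df r 0 = 0 := by unfold df; rw [hk]; simp
    rw [hk, hdf]
    simp [eps_C]
  have hi : ∀ i ∈ Finset.range r,
      eps (psiT r (Polynomial.monomial (i+1) 1)) = sP * tst^(r-1-i) := by
    intro i hi
    rw [Finset.mem_range] at hi
    obtain ⟨hk1, hd1⟩ := kd_unique r hr (m := i+1) (k := 1) (d := r-(i+1))
      (by omega) (by omega)
    rw [psiT_monomial, hk1, hd1]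
    rw [map_mul, eps_C, map_pow, eps_X]
    have he : r - (i+1) = r-1-i := by omega
    rw [he]
    congr 1
    rw [show sP = @PowerSeries.C (Polynomial ℤ) _ Polynomial.X from rfl]
    congr 1
    simp
  rw [Finset.sum_congr rfl hi, h0]
  rw [Finset.sum_range_reflect (fun d => sP * tst^d) r, Finset.mul_sum]
  ring

lemma final (r : ℕ) :
    (1 + sP) * ((1 - PowerSeries.X)^(r+1)
        - sP * (1 - PowerSeries.X) * (1 - sP^2 * PowerSeries.X)^r)
      * (PowerSeries.mk fun n => if n = 0 then 0 else
          ∑ᶠ k : ℕ, (Lp n (k+1) r : Polynomial ℤ) * Polynomial.X^k)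
      = (1 - sP^2 * PowerSeries.X)^(r+1) - (1 - PowerSeries.X)^(r+1) := by
  have hs : sP ≠ 0 := by
    intro h
    have h2 := congrArg (@PowerSeries.constantCoeff (Polynomial ℤ) _) h
    simp only [sP, PowerSeries.constantCoeff_C, map_zero] at h2
    exact Polynomial.X_ne_zero h2
  rcases Nat.eq_zero_or_pos r with rfl | hr
  · -- r = 0
    have hLp1 : ∀ n : ℕ, Lp (n+1) 1 0 = 1 := by
      intro n
      unfold Lp
      rw [if_pos rfl]
      have : {y : Fin (n+1) → ℤ |
          (∀ j, 0 ≤ y j ∧ y j ≤ 2 * ((0:ℕ) : ℤ)) ∧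
          (∀ j : Fin (n+1), (j : ℕ) = 0 → y j ≤ ((0:ℕ) : ℤ)) ∧
          0 ≤ ∑ j, y j ∧ ∑ j, y j ≤ ((0:ℕ) : ℤ)} = {fun _ => 0} := by
        ext y
        simp only [Set.mem_setOf_eq, Set.mem_singleton_iff, Nat.cast_zero, mul_zero]
        constructor
        · rintro ⟨h1, _, _⟩
          funext j
          have := h1 j
          omega
        · rintro rfl
          simp
      rw [this, Set.ncard_singleton]
    have hLpk : ∀ n k : ℕ, 1 ≤ k → Lp (n+1) (k+1) 0 = 0 := by
      intro n k hk
      unfold Lp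
      rw [if_neg (by omega)]
      have : {y : Fin (n+1) → ℤ |
          (∀ j, 0 ≤ y j ∧ y j ≤ 2 * ((0:ℕ) : ℤ)) ∧
          (∀ j : Fin (n+1), (j : ℕ) = 0 → y j ≤ ((0:ℕ) : ℤ)) ∧
          (((k+1:ℕ) : ℤ) - 1) * ((0:ℕ) : ℤ) < ∑ j, y j ∧ ∑ j, y j ≤ ((k+1:ℕ) : ℤ) * ((0:ℕ) : ℤ)}
          = (∅ : Set (Fin (n+1) → ℤ)) := by
        ext y
        simp only [Set.mem_setOf_eq, Set.mem_empty_iff_false, iff_false]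
        rintro ⟨h1, h2, h3, h4⟩
        have h5 : (0:ℤ) < ∑ j, y j := by simpa using h3
        have h6 : (∑ j, y j : ℤ) ≤ 0 := by simpa using h4
        omega
      rw [this, Set.ncard_empty]
    have hF : (PowerSeries.mk fun n => if n = 0 then 0 else
        ∑ᶠ k : ℕ, (Lp n (k+1) 0 : Polynomial ℤ) * Polynomial.X^k)
        = PowerSeries.X * iA := by
      refine PowerSeries.ext fun n => ?_
      cases n with
      | zero => simp
      | succ n =>
          rw [PowerSeries.coeff_succ_X_mul]
          simp only [iA, PowerSeries.coeff_mk, if_neg (Nat.succ_ne_zero n)]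
          have : (∑ᶠ k : ℕ, (Lp (n+1) (k+1) 0 : Polynomial ℤ) * Polynomial.X^k)
              = (Lp (n+1) (0+1) 0 : Polynomial ℤ) * Polynomial.X^0 := by
            refine finsum_eq_single _ 0 fun k hk => ?_
            rw [hLpk n k (by omega)]
            simp
          rw [this, hLp1 n]
          simp
    rw [hF]
    have h5 := hAiA
    simp only [pow_zero, pow_one]
    linear_combination ((1 - sP^2) * PowerSeries.X) * h5
  · -- r ≥ 1
    have h2 := sF r hr
    have hmaster := master r hr
    have htstr := htstd r
    have htau0 := tau0_eq r hr
    have h5 := hAiA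
    set σ : PowerSeries (Polynomial ℤ) :=
      ∑ d ∈ Finset.range r, (1 - sP^2*PowerSeries.X)^d * (1 - PowerSeries.X)^(r-1-d) with hσ
    have hsig : (1 - PowerSeries.X)^r * (∑ d ∈ Finset.range r, tst^d)
        = (1 - PowerSeries.X) * σ := by
      rw [hσ, Finset.mul_sum, Finset.mul_sum]
      refine Finset.sum_congr rfl fun d hd => ?_
      rw [Finset.mem_range] at hd
      have hp : (1 - PowerSeries.X : PowerSeries (Polynomial ℤ))^r
          = (1 - PowerSeries.X)^(r-1-d) * (1 - PowerSeries.X) * (1 - PowerSeries.X)^d := by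
        rw [mul_assoc, ← pow_succ', ← pow_add]
        congr 1
        omega
      rw [hp]
      linear_combination ((1 - PowerSeries.X)^(r-1-d) * (1 - PowerSeries.X)) * htstd d
    have hgeom : σ * ((1 - sP^2*PowerSeries.X) - (1 - PowerSeries.X))
        = (1 - sP^2*PowerSeries.X)^r - (1 - PowerSeries.X)^r := by
      rw [hσ]
      exact geom_sum₂_mul _ _ r
    have hm' : (1 - sP^2) * ((1 - PowerSeries.X)^r * tauPS r 0)
        = ((1 + sP) * (1 - PowerSeries.X)^(r+1)
            - (sP + sP^2) * (1 - PowerSeries.X) * (1 - sP^2*PowerSeries.X)^r) * Vser r := by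
      linear_combination ((1 - PowerSeries.X)^r) * hmaster
        - ((sP + sP^2) * (1 - PowerSeries.X) * Vser r) * htstr
    have hτ0A : (1 - PowerSeries.X)^r * tauPS r 0
        = (1 - PowerSeries.X)^r + sP * (1 - PowerSeries.X) * σ := by
      linear_combination ((1 - PowerSeries.X)^r) * htau0 + sP * hsig
    refine mul_left_cancel₀ hs ?_
    linear_combination ((1 + sP) * ((1 - PowerSeries.X)^(r+1)
          - sP * (1 - PowerSeries.X) * (1 - sP^2*PowerSeries.X)^r)) * h2
      - PowerSeries.X * hm'
      + ((1 - sP^2*PowerSeries.X) - (1 - PowerSeries.X)) * hτ0A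
      + (sP * (1 - PowerSeries.X)) * hgeom
      + ((sP - 1) * (1 + sP) * PowerSeries.X
          * ((1 - PowerSeries.X)^r - sP * (1 - sP^2*PowerSeries.X)^r)) * h5

end PS

end GFE

/-- Proposition, generating function of the Ehrhart counts.
Fix `r ≥ 0`. In `ℤ[s]⟦u⟧`, with
`F_r(s,u) = Σ_{n≥1} (Σ_{k≥0} L'_{n,k+1}(r) s^k) uⁿ`, one has
`(1+s)((1-u)^{r+1} - s(1-u)(1-s²u)^r) F_r = (1-s²u)^{r+1} - (1-u)^{r+1}`. -/
theorem gen_fun_ehrhart (r : ℕ) :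
    letI s : PowerSeries (Polynomial ℤ) := PowerSeries.C (R := Polynomial ℤ) Polynomial.X
    letI u : PowerSeries (Polynomial ℤ) := PowerSeries.X
    letI F : PowerSeries (Polynomial ℤ) := PowerSeries.mk fun n =>
      if n = 0 then 0 else
        ∑ᶠ k : ℕ, (Lp n (k + 1) r : Polynomial ℤ) * Polynomial.X ^ k
    (1 + s) * ((1 - u) ^ (r + 1) - s * (1 - u) * (1 - s ^ 2 * u) ^ r) * F
      = (1 - s ^ 2 * u) ^ (r + 1) - (1 - u) ^ (r + 1) :=
  GFE.final r
end

section
/- For all n ≥ 1 and k ≥ 1, B_{n,k} = #{w ∈ X_n : fexc(w) = 2k−2} + 2·#{w ∈ X_n : fexc(w) = 2k−1} + #{w ∈ X_n : fexc(w) = 2k}. (Equivalently, the type B Eulerian number B_{n,k} equals Vol(Δ_{C_n,2k−1}) + 2·Vol(Δ_{C_n,2k}) + Vol(Δ_{C_n,2k+1}), where the volume of a nonexistent hypersimplex is 0.) -/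
open scoped Classical

open Finset

namespace SPm

abbrev SP (n : ℕ) := Equiv.Perm (Fin n) × (Fin n → Bool)

def wrd {n : ℕ} (x : SP n) (i : Fin n) : ℤ :=
  if x.2 i then ((x.1 i : ℕ) : ℤ) + 1 else -(((x.1 i : ℕ) : ℤ) + 1)

lemma wrd_pos_iff {n : ℕ} (x : SP n) (i : Fin n) : 0 < wrd x i ↔ x.2 i = true := by
  unfold wrd; split <;> simp_all <;> omega

lemma wrd_pos_bounds {n : ℕ} (x : SP n) (i : Fin n) (h : x.2 i = true) :
    wrd x i = ((x.1 i : ℕ) : ℤ) + 1 := by unfold wrd; simp [h]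

lemma wrd_neg_bounds {n : ℕ} (x : SP n) (i : Fin n) (h : x.2 i = false) :
    wrd x i = -(((x.1 i : ℕ) : ℤ) + 1) := by unfold wrd; simp [h]

lemma wrd_abs_le {n : ℕ} (x : SP n) (i : Fin n) : 1 ≤ |wrd x i| ∧ |wrd x i| ≤ n := by
  have h := (x.1 i).isLt
  have h' : ((x.1 i : ℕ) : ℤ) < (n : ℤ) := by exact_mod_cast h
  unfold wrd; split
  · rw [abs_of_pos (by omega)]; omega
  · rw [abs_of_neg (by omega)]; omega

lemma wrd_injective {n : ℕ} (x x' : SP n) (h : wrd x = wrd x') : x = x' := by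
  have hε : x.2 = x'.2 := by
    funext i
    have h1 := wrd_pos_iff x i
    have h2 := wrd_pos_iff x' i
    rw [h] at h1
    rcases Bool.eq_false_or_eq_true (x.2 i) with hb | hb <;>
      rcases Bool.eq_false_or_eq_true (x'.2 i) with hb' | hb' <;> simp_all
  have hσ : x.1 = x'.1 := by
    apply Equiv.ext; intro i
    have := congrFun h i
    unfold wrd at this
    rw [hε] at this
    split at this <;> [skip; skip] <;>
    · have : ((x.1 i : ℕ) : ℤ) = ((x'.1 i : ℕ) : ℤ) := by omega
      exact Fin.ext (by exact_mod_cast this)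
  exact Prod.ext hσ hε

def invSP {n : ℕ} (x : SP n) : SP n := (x.1⁻¹, fun i => x.2 (x.1⁻¹ i))

lemma invSP_invSP {n : ℕ} (x : SP n) : invSP (invSP x) = x := by
  unfold invSP
  refine Prod.ext (by simp) ?_
  funext i; simp

lemma out_of_range {n : ℕ} {j : ℤ} (h : ¬(0 < j ∧ j ≤ (n : ℤ)))
    (h' : ¬(0 < -j ∧ -j ≤ (n : ℤ))) : j = 0 ∨ (n : ℤ) < |j| := by
  rcases abs_cases j with ⟨e, _⟩ | ⟨e, _⟩ <;> omega

noncomputable def thetaFun {n : ℕ} (x : SP n) (j : ℤ) : ℤ :=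
  if h : 0 < j ∧ j ≤ (n : ℤ) then wrd x ⟨(j - 1).toNat, by omega⟩
  else if h' : 0 < -j ∧ -j ≤ (n : ℤ) then -(wrd x ⟨(-j - 1).toNat, by omega⟩)
  else j

lemma thetaFun_coe {n : ℕ} (x : SP n) (i : Fin n) :
    thetaFun x ((i : ℤ) + 1) = wrd x i := by
  have hi := i.isLt
  unfold thetaFun
  rw [dif_pos (by constructor <;> omega)]
  congr 1
  exact Fin.ext (by simp)

lemma thetaFun_neg_coe {n : ℕ} (x : SP n) (i : Fin n) :
    thetaFun x (-((i : ℤ) + 1)) = -wrd x i := by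
  have hi := i.isLt
  unfold thetaFun
  rw [dif_neg (by omega), dif_pos (by constructor <;> omega)]
  congr 2
  exact Fin.ext (by simp)

lemma thetaFun_out {n : ℕ} (x : SP n) (j : ℤ) (h : j = 0 ∨ (n : ℤ) < |j|) :
    thetaFun x j = j := by
  have h' : j = 0 ∨ (n : ℤ) < j ∨ j < -(n : ℤ) := by
    rcases h with h | h
    · exact Or.inl h
    · rcases abs_cases j with ⟨e, _⟩ | ⟨e, _⟩ <;> omega
  unfold thetaFun
  rw [dif_neg (by omega), dif_neg (by omega)]

lemma wrd_invSP_apply {n : ℕ} (x : SP n) (i : Fin n) :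
    wrd (invSP x) (x.1 i) = if x.2 i then ((i : ℕ) : ℤ) + 1 else -(((i : ℕ) : ℤ) + 1) := by
  unfold wrd invSP
  simp

lemma thetaFun_leftinv {n : ℕ} (x : SP n) (j : ℤ) :
    thetaFun (invSP x) (thetaFun x j) = j := by
  rcases Classical.em (0 < j ∧ j ≤ (n : ℤ)) with h | h
  · set i : Fin n := ⟨(j - 1).toNat, by omega⟩ with hidef
    have hji : (i : ℤ) + 1 = j := by simp [hidef]; omega
    rw [show thetaFun x j = wrd x i by rw [← hji, thetaFun_coe]]
    rcases Bool.eq_false_or_eq_true (x.2 i) with hb | hb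
    · rw [wrd_pos_bounds x i hb, thetaFun_coe (invSP x) (x.1 i),
        wrd_invSP_apply, if_pos (by simp [hb])]
      omega
    · rw [wrd_neg_bounds x i hb, thetaFun_neg_coe (invSP x) (x.1 i),
        wrd_invSP_apply, if_neg (by simp [hb])]
      omega
  · rcases Classical.em (0 < -j ∧ -j ≤ (n : ℤ)) with h' | h'
    · set i : Fin n := ⟨(-j - 1).toNat, by omega⟩ with hidef
      have hji : -((i : ℤ) + 1) = j := by simp [hidef]; omega
      rw [show thetaFun x j = -wrd x i by rw [← hji, thetaFun_neg_coe]]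
      rcases Bool.eq_false_or_eq_true (x.2 i) with hb | hb
      · rw [wrd_pos_bounds x i hb]
        rw [thetaFun_neg_coe (invSP x) (x.1 i), wrd_invSP_apply, if_pos (by simp [hb])]
        omega
      · rw [wrd_neg_bounds x i hb]
        rw [neg_neg, thetaFun_coe (invSP x) (x.1 i), wrd_invSP_apply, if_neg (by simp [hb])]
        omega
    · have hj := out_of_range (n := n) h h'
      rw [thetaFun_out x j hj, thetaFun_out _ j hj]

noncomputable def theta {n : ℕ} (x : SP n) : Equiv.Perm ℤ :=
  ⟨thetaFun x, thetaFun (invSP x), fun j => thetaFun_leftinv x j,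
    fun j => by have := thetaFun_leftinv (invSP x) j; rwa [invSP_invSP] at this⟩

lemma theta_apply {n : ℕ} (x : SP n) (j : ℤ) : theta x j = thetaFun x j := rfl

lemma theta_symm {n : ℕ} (x : SP n) : (theta x).symm = theta (invSP x) := by
  apply Equiv.ext; intro j; rfl

lemma isSignedPerm_theta {n : ℕ} (x : SP n) : IsSignedPerm n (theta x) := by
  constructor
  · intro j
    rcases Classical.em (0 < j ∧ j ≤ (n : ℤ)) with h | h
    · set i : Fin n := ⟨(j - 1).toNat, by omega⟩ with hidef
      have hji : (i : ℤ) + 1 = j := by simp [hidef]; omega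
      rw [theta_apply, theta_apply, ← hji, thetaFun_neg_coe, thetaFun_coe]
    · rcases Classical.em (0 < -j ∧ -j ≤ (n : ℤ)) with h' | h'
      · set i : Fin n := ⟨(-j - 1).toNat, by omega⟩ with hidef
        have hji : -((i : ℤ) + 1) = j := by simp [hidef]; omega
        rw [theta_apply, theta_apply, ← hji, neg_neg, thetaFun_coe, thetaFun_neg_coe, neg_neg]
      · have hj := out_of_range (n := n) h h'
        have hj' : -j = 0 ∨ (n : ℤ) < |-j| := by rw [abs_neg]; rcases hj with hj | hj <;> simp [hj]
        rw [theta_apply, theta_apply, thetaFun_out x j hj, thetaFun_out x (-j) hj']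
  · intro j hj
    rw [theta_apply, thetaFun_out x j (Or.inr hj)]

lemma theta_injective {n : ℕ} : Function.Injective (theta (n := n)) := by
  intro x x' h
  apply wrd_injective
  funext i
  have := congrArg (fun w : Equiv.Perm ℤ => w ((i : ℤ) + 1)) h
  simpa [theta_apply, thetaFun_coe] using this

lemma theta_surjective {n : ℕ} (w : Equiv.Perm ℤ) (hw : IsSignedPerm n w) :
    ∃ x : SP n, theta x = w := by
  obtain ⟨hodd, hfix⟩ := hw
  have h0 : w 0 = 0 := by have := hodd 0; simp at this; omega
  have habs : ∀ j : ℤ, 0 < j → j ≤ (n : ℤ) → 0 < |w j| ∧ |w j| ≤ (n : ℤ) := by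
    intro j h1 h2
    constructor
    · rcases Classical.em (w j = 0) with hz | hz
      · exact absurd (w.injective (hz.trans h0.symm)) (by omega)
      · rcases abs_cases (w j) with ⟨e, _⟩ | ⟨e, _⟩ <;> omega
    · by_contra hlt
      push_neg at hlt
      have hfx := hfix (w j) hlt
      have := w.injective hfx
      rcases abs_cases (w j) with ⟨e, _⟩ | ⟨e, _⟩ <;> omega
  have gdef : ∀ i : Fin n, (|w ((i : ℤ) + 1)| - 1).toNat < n := by
    intro i
    have hi := i.isLt
    have := habs ((i : ℤ) + 1) (by omega) (by omega)
    omega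
  set g : Fin n → Fin n := fun i => ⟨(|w ((i : ℤ) + 1)| - 1).toNat, gdef i⟩ with hg
  have ginj : Function.Injective g := by
    intro a b hab
    have hi := a.isLt; have hj := b.isLt
    have h1 := habs ((a : ℤ) + 1) (by omega) (by omega)
    have h2 := habs ((b : ℤ) + 1) (by omega) (by omega)
    have heq : |w ((a : ℤ) + 1)| = |w ((b : ℤ) + 1)| := by
      have := congrArg Fin.val hab
      simp [hg] at this
      omega
    have : w ((a : ℤ) + 1) = w ((b : ℤ) + 1) ∨ w ((a : ℤ) + 1) = -w ((b : ℤ) + 1) := by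
      rcases abs_cases (w ((a : ℤ) + 1)) with ⟨e1, _⟩ | ⟨e1, _⟩ <;>
        rcases abs_cases (w ((b : ℤ) + 1)) with ⟨e2, _⟩ | ⟨e2, _⟩ <;> omega
    rcases this with hc | hc
    · have := w.injective hc
      exact Fin.ext (by omega)
    · rw [← hodd] at hc
      have := w.injective hc
      have := a.isLt; have := b.isLt
      omega
  have gbij := (Finite.injective_iff_bijective).1 ginj
  refine ⟨(Equiv.ofBijective g gbij, fun i => decide (0 < w ((i : ℤ) + 1))), ?_⟩
  apply Equiv.ext
  intro j
  rcases Classical.em (0 < j ∧ j ≤ (n : ℤ)) with h | h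
  · set i : Fin n := ⟨(j - 1).toNat, by omega⟩ with hidef
    have hji : (i : ℤ) + 1 = j := by simp [hidef]; omega
    rw [theta_apply, ← hji, thetaFun_coe]
    unfold wrd
    simp only [Equiv.ofBijective_apply]
    have hgv : ((g i : ℕ) : ℤ) = |w ((i : ℤ) + 1)| - 1 := by
      have hbb := habs ((i : ℤ) + 1) (by omega) (by omega)
      have hr : (g i : ℕ) = (|w ((i : ℤ) + 1)| - 1).toNat := rfl
      rw [hr]
      omega
    split <;> rename_i hb <;> simp only [decide_eq_true_eq] at hb
    · rw [hgv]; rw [hji] at *; rw [abs_of_pos hb]; ring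
    · rw [hgv]; rw [hji] at *
      have := habs j (by omega) (by omega)
      rw [abs_of_nonpos (by omega)]; ring
  · rcases Classical.em (0 < -j ∧ -j ≤ (n : ℤ)) with h' | h'
    · set i : Fin n := ⟨(-j - 1).toNat, by omega⟩ with hidef
      have hji : -((i : ℤ) + 1) = j := by simp [hidef]; omega
      rw [theta_apply, ← hji, thetaFun_neg_coe]
      have : w (-((i : ℤ) + 1)) = -w ((i : ℤ) + 1) := hodd _
      rw [this]
      congr 1
      unfold wrd
      simp only [Equiv.ofBijective_apply]
      have hgv : ((g i : ℕ) : ℤ) = |w ((i : ℤ) + 1)| - 1 := by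
        have hi := i.isLt
        have hbb := habs ((i : ℤ) + 1) (by omega) (by omega)
        have hr : (g i : ℕ) = (|w ((i : ℤ) + 1)| - 1).toNat := rfl
        rw [hr]
        omega
      have hi := i.isLt
      have := habs ((i : ℤ) + 1) (by omega) (by omega)
      split <;> rename_i hb <;> simp only [decide_eq_true_eq] at hb
      · have hb2 : 0 < w ((i : ℤ) + 1) := hb
        rw [hgv, abs_of_pos hb2]; ring
      · have hb2 : ¬ 0 < w ((i : ℤ) + 1) := hb
        rw [hgv, abs_of_nonpos (by omega)]; ring
    · have hj := out_of_range (n := n) h h'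
      rw [theta_apply, thetaFun_out _ j hj]
      rcases hj with hj | hj
      · rw [hj, h0]
      · exact (hfix j hj).symm

noncomputable def desc {m : ℕ} (g : Fin (m + 1) → ℤ) : ℕ :=
  (univ.filter fun i : Fin m => g i.succ < g i.castSucc).card

noncomputable def desP {n : ℕ} (x : SP n) : ℕ := desc (Fin.cons 0 (wrd x))

noncomputable def fexcP {n : ℕ} (x : SP n) : ℕ :=
  2 * (univ.filter fun i : Fin n => x.2 i = true ∧ i < x.1 i).card
    + (univ.filter fun i : Fin n => x.2 i = false).card

def inXP {n : ℕ} (x : SP (n + 1)) : Prop := x.2 (x.1⁻¹ 0) = true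

lemma ncard_transfer {n : ℕ} (Q : SP n → Prop) [DecidablePred Q] (Q' : Equiv.Perm ℤ → Prop)
    (hQ : ∀ x : SP n, Q' (theta x) ↔ Q x) :
    {w : Equiv.Perm ℤ | IsSignedPerm n w ∧ Q' w}.ncard
      = (univ.filter fun x : SP n => Q x).card := by
  rw [← Nat.card_coe_set_eq]
  have e : {x : SP n // Q x} ≃ {w : Equiv.Perm ℤ // w ∈ {w | IsSignedPerm n w ∧ Q' w}} := by
    refine Equiv.ofBijective (fun x => ⟨theta x.1, isSignedPerm_theta x.1, (hQ x.1).2 x.2⟩) ⟨?_, ?_⟩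
    · intro a b hab
      exact Subtype.ext (theta_injective (congrArg Subtype.val hab))
    · rintro ⟨w, hw1, hw2⟩
      obtain ⟨x, hx⟩ := theta_surjective w hw1
      exact ⟨⟨x, (hQ x).1 (by rw [hx]; exact hw2)⟩, Subtype.ext hx⟩
  rw [← Nat.card_congr e, Nat.card_eq_fintype_card, Fintype.card_subtype]

lemma theta_zero {n : ℕ} (x : SP n) : theta x 0 = 0 := by
  rw [theta_apply, thetaFun_out x 0 (Or.inl rfl)]

lemma card_rangeZ_filter_eq {n : ℕ} (P : ℤ → Prop) [DecidablePred P] (Q : Fin n → Prop)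
    [DecidablePred Q] (h : ∀ i : Fin n, P (i : ℤ) ↔ Q i) :
    (((do let a ← Finset.range n; pure ((a : ℤ))) : Finset ℤ).filter P).card
      = (univ.filter Q).card := by
  have hmem : ∀ j : ℤ, j ∈ ((do let a ← Finset.range n; pure ((a : ℤ))) : Finset ℤ)
      ↔ ∃ a : ℕ, a < n ∧ (a : ℤ) = j := by
    intro j; simp [Finset.mem_biUnion]
  refine Finset.card_bij' (fun a ha => (⟨a.toNat, ?_⟩ : Fin n)) (fun b _ => (b : ℤ)) ?_ ?_ ?_ ?_
  · rw [mem_filter, hmem] at ha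
    obtain ⟨⟨b, hb1, hb2⟩, _⟩ := ha
    omega
  · intro a ha
    rw [mem_filter, hmem] at ha
    obtain ⟨⟨b, hb1, hb2⟩, hPa⟩ := ha
    simp only [mem_filter, mem_univ, true_and]
    apply (h _).1
    have : ((⟨a.toNat, by omega⟩ : Fin n) : ℤ) = a := by simp; omega
    rwa [this]
  · intro b hb
    simp only [mem_filter, mem_univ, true_and] at hb
    simp only [mem_filter, hmem]
    exact ⟨⟨(b : ℕ), b.isLt, rfl⟩, (h b).2 hb⟩
  · intro a ha
    rw [mem_filter, hmem] at ha
    obtain ⟨⟨b, hb1, hb2⟩, _⟩ := ha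
    simp
    omega
  · intro b hb
    exact Fin.ext (by simp)

lemma card_Icc_filter_eq {n : ℕ} (P : ℤ → Prop) [DecidablePred P] (Q : Fin n → Prop)
    [DecidablePred Q] (h : ∀ i : Fin n, P ((i : ℤ) + 1) ↔ Q i) :
    ((Finset.Icc (1 : ℤ) (n : ℤ)).filter P).card = (univ.filter Q).card := by
  refine Finset.card_bij' (fun a ha => (⟨(a - 1).toNat, ?_⟩ : Fin n)) (fun b _ => (b : ℤ) + 1)
    ?_ ?_ ?_ ?_
  · rw [mem_filter, Finset.mem_Icc] at ha
    omega
  · intro a ha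
    rw [mem_filter, Finset.mem_Icc] at ha
    simp only [mem_filter, mem_univ, true_and]
    apply (h _).1
    have : ((⟨(a - 1).toNat, by omega⟩ : Fin n) : ℤ) + 1 = a := by simp; omega
    rw [this]
    exact ha.2
  · intro b hb
    simp only [mem_filter, mem_univ, true_and] at hb
    simp only [mem_filter, Finset.mem_Icc]
    have := b.isLt
    exact ⟨⟨by omega, by omega⟩, (h b).2 hb⟩
  · intro a ha
    rw [mem_filter, Finset.mem_Icc] at ha
    simp
    omega
  · intro b hb
    exact Fin.ext (by simp)

lemma theta_coe {n : ℕ} (x : SP n) (i : Fin n) : theta x ((i : ℤ) + 1) = wrd x i :=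
  thetaFun_coe x i

lemma desB_theta {n : ℕ} (x : SP n) : desB n (theta x) = desP x := by
  unfold desB desP desc
  apply card_rangeZ_filter_eq
  intro i
  rcases i with ⟨iv, hiv⟩
  have hsucc : (Fin.cons (0 : ℤ) (wrd x) : Fin (n + 1) → ℤ) ((⟨iv, hiv⟩ : Fin n).succ)
      = wrd x ⟨iv, hiv⟩ := Fin.cons_succ _ _ _
  have hval : theta x (((⟨iv, hiv⟩ : Fin n) : ℤ) + 1) = wrd x ⟨iv, hiv⟩ := theta_coe x ⟨iv, hiv⟩
  rcases iv with _ | m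
  · have hz : theta x (((⟨0, hiv⟩ : Fin n) : ℕ) : ℤ) = 0 := by
      have : (((⟨0, hiv⟩ : Fin n) : ℕ) : ℤ) = 0 := by simp
      rw [this, theta_zero]
    have hcs : (⟨0, hiv⟩ : Fin n).castSucc = 0 := by ext; simp
    rw [hcs, Fin.cons_zero, hsucc, hz, hval]
  · have hm : m < n := by omega
    have hcs : (⟨m + 1, hiv⟩ : Fin n).castSucc = (⟨m, hm⟩ : Fin n).succ := by ext; simp
    rw [hcs, Fin.cons_succ, Fin.cons_succ]
    have hmm : theta x (((⟨m + 1, hiv⟩ : Fin n) : ℕ) : ℤ) = wrd x ⟨m, hm⟩ := by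
      have h2 : (((⟨m + 1, hiv⟩ : Fin n) : ℕ) : ℤ) = ((⟨m, hm⟩ : Fin n) : ℤ) + 1 := by
        simp
      rw [h2, theta_coe]
    rw [hmm, hval]

lemma fexc_theta {n : ℕ} (x : SP n) : fexc n (theta x) = fexcP x := by
  unfold fexc fexcP
  congr 1
  · congr 1
    apply card_Icc_filter_eq
    intro i
    rw [theta_coe]
    rcases Bool.eq_false_or_eq_true (x.2 i) with hb | hb
    · rw [wrd_pos_bounds x i hb]
      simp only [hb, true_and]
      constructor
      · intro hlt
        have h2 : ((i : ℕ) : ℤ) < ((x.1 i : ℕ) : ℤ) := by omega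
        exact_mod_cast h2
      · intro hlt
        have h2 : ((i : ℕ) : ℤ) < ((x.1 i : ℕ) : ℤ) := by exact_mod_cast hlt
        omega
    · rw [wrd_neg_bounds x i hb]
      constructor
      · intro hlt; exfalso; omega
      · rintro ⟨hcon, -⟩; simp [hb] at hcon
  · apply card_Icc_filter_eq
    intro i
    rw [theta_coe]
    rcases Bool.eq_false_or_eq_true (x.2 i) with hb | hb
    · rw [wrd_pos_bounds x i hb]
      constructor
      · intro hlt; exfalso; omega
      · intro hcon; rw [hb] at hcon; simp at hcon
    · rw [wrd_neg_bounds x i hb]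
      constructor
      · intro _; exact hb
      · intro _; omega

lemma inXn_theta {n : ℕ} (x : SP (n + 1)) : InXn (n + 1) (theta x) ↔ inXP x := by
  unfold InXn inXP
  rw [theta_symm]
  have h1 : theta (invSP x) 1 = wrd (invSP x) 0 := by
    have h0 : ((0 : Fin (n + 1)) : ℤ) + 1 = 1 := by simp
    rw [← h0, theta_coe]
  rw [h1]
  have h2 : (invSP x).2 0 = x.2 (x.1⁻¹ 0) := rfl
  constructor
  · rintro ⟨_, hpos⟩
    rw [← h2]
    exact (wrd_pos_iff (invSP x) 0).1 hpos
  · intro hb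
    exact ⟨isSignedPerm_theta x, (wrd_pos_iff (invSP x) 0).2 (h2 ▸ hb)⟩

-- Part D : flip
def flip0 {n : ℕ} (x : SP (n + 1)) : SP (n + 1) :=
  (x.1, Function.update x.2 (x.1⁻¹ 0) (!(x.2 (x.1⁻¹ 0))))

lemma flip0_invol {n : ℕ} (x : SP (n + 1)) : flip0 (flip0 x) = x := by
  unfold flip0
  refine Prod.ext rfl ?_
  simp only
  funext i
  rcases Classical.em (i = x.1⁻¹ 0) with h | h
  · subst h; simp [Function.update_self]
  · simp [Function.update_of_ne h]

lemma inXP_flip0 {n : ℕ} (x : SP (n + 1)) : inXP (flip0 x) ↔ ¬ inXP x := by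
  unfold inXP flip0
  simp only [Function.update_self]
  rcases Bool.eq_false_or_eq_true (x.2 (x.1⁻¹ 0)) with hb | hb <;> simp [hb]

lemma fexcP_flip0 {n : ℕ} (x : SP (n + 1)) (h : inXP x) : fexcP (flip0 x) = fexcP x + 1 := by
  unfold fexcP flip0 inXP at *
  set q := x.1⁻¹ 0 with hq
  have hq0 : x.1 q = 0 := by rw [hq]; simp
  have hfilt : (univ.filter fun i : Fin (n+1) =>
      (Function.update x.2 q (!(x.2 q)) i = true ∧ i < x.1 i)) =
      (univ.filter fun i : Fin (n+1) => x.2 i = true ∧ i < x.1 i) := by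
    apply Finset.filter_congr
    intro i _
    rcases Classical.em (i = q) with hiq | hiq
    · subst hiq
      rw [hq0]
      simp [Fin.not_lt_zero]
    · rw [Function.update_of_ne hiq]
  simp only
  rw [hfilt]
  have hcount : (univ.filter fun i : Fin (n+1) => Function.update x.2 q (!(x.2 q)) i = false).card
      = (univ.filter fun i : Fin (n+1) => x.2 i = false).card + 1 := by
    rw [Finset.card_filter, Finset.card_filter]
    have hpt : (fun i : Fin (n+1) => if Function.update x.2 q (!(x.2 q)) i = false then (1:ℕ) else 0)
        = Function.update (fun i : Fin (n+1) => if x.2 i = false then (1:ℕ) else 0) q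
            (if (!(x.2 q)) = false then (1:ℕ) else 0) := by
      funext i
      rcases Classical.em (i = q) with hiq | hiq
      · subst hiq; simp [Function.update_self]
      · simp [Function.update_of_ne hiq]
    rw [hpt, Finset.sum_update_of_mem (Finset.mem_univ q)]
    rw [Finset.sum_eq_sum_sdiff_singleton_add (Finset.mem_univ q)
      (fun i : Fin (n+1) => if x.2 i = false then (1:ℕ) else 0)]
    rw [h]
    simp
    omega
  rw [hcount]
  ring

-- Part E : fexc distribution
noncomputable def excP {n : ℕ} (σ : Equiv.Perm (Fin n)) : ℕ :=
  (univ.filter fun i => i < σ i).card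

noncomputable def Cz (a : ℕ) (z : ℤ) : ℕ := if 0 ≤ z then a.choose z.toNat else 0

lemma excP_le {n : ℕ} (σ : Equiv.Perm (Fin n)) : excP σ ≤ n := by
  unfold excP
  calc (univ.filter fun i => i < σ i).card ≤ (univ : Finset (Fin n)).card :=
        Finset.card_filter_le _ _
    _ = n := by simp

lemma fexcP_eq_sum {n : ℕ} (x : SP n) :
    fexcP x = ∑ i : Fin n, (if x.2 i then (if i < x.1 i then 2 else 0) else 1) := by
  unfold fexcP
  rw [Finset.card_filter, Finset.card_filter, Finset.mul_sum, ← Finset.sum_add_distrib]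
  apply Finset.sum_congr rfl
  intro i _
  rcases Bool.eq_false_or_eq_true (x.2 i) with hb | hb <;>
    rcases Classical.em (i < x.1 i) with hl | hl <;> simp [hb, hl]

open Polynomial in
lemma sum_pow_fexc {n : ℕ} (σ : Equiv.Perm (Fin n)) :
    ∑ ε : Fin n → Bool, (X : Polynomial ℕ) ^ fexcP (σ, ε)
      = X ^ excP σ * (X + 1) ^ n := by
  have h1 : ∀ ε : Fin n → Bool, (X : Polynomial ℕ) ^ fexcP (σ, ε)
      = ∏ i : Fin n, (X : Polynomial ℕ) ^ (if ε i then (if i < σ i then 2 else 0) else 1) := by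
    intro ε
    rw [fexcP_eq_sum, ← Finset.prod_pow_eq_pow_sum]
  calc ∑ ε : Fin n → Bool, (X : Polynomial ℕ) ^ fexcP (σ, ε)
      = ∑ ε : Fin n → Bool, ∏ i : Fin n,
          (X : Polynomial ℕ) ^ (if ε i then (if i < σ i then 2 else 0) else 1) := by
        exact Finset.sum_congr rfl fun ε _ => h1 ε
    _ = ∏ i : Fin n, ∑ b : Bool, (X : Polynomial ℕ) ^ (if b then (if i < σ i then 2 else 0) else 1) := by
        rw [Finset.prod_univ_sum, Fintype.piFinset_univ]
    _ = ∏ i : Fin n, ((if i < σ i then (X : Polynomial ℕ) ^ 2 else 1) + X) := by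
        apply Finset.prod_congr rfl
        intro i _
        rw [Fintype.sum_bool]
        rcases Classical.em (i < σ i) with hl | hl <;> simp [hl]
    _ = X ^ excP σ * (X + 1) ^ n := by
        rw [← Finset.prod_filter_mul_prod_filter_not univ (fun i => i < σ i)]
        have e1 : ∏ i ∈ univ.filter (fun i => i < σ i),
            ((if i < σ i then (X : Polynomial ℕ) ^ 2 else 1) + X)
            = (X ^ 2 + X) ^ excP σ := by
          rw [Finset.prod_congr rfl (fun i hi => by
            simp only [Finset.mem_filter] at hi
            rw [if_pos hi.2]), Finset.prod_const]
          rfl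
        have e2 : ∏ i ∈ univ.filter (fun i => ¬ i < σ i),
            ((if i < σ i then (X : Polynomial ℕ) ^ 2 else 1) + X)
            = (1 + X) ^ (n - excP σ) := by
          rw [Finset.prod_congr rfl (fun i hi => by
            simp only [Finset.mem_filter] at hi
            rw [if_neg hi.2]), Finset.prod_const]
          congr 1
          unfold excP
          rw [Finset.filter_not, Finset.card_sdiff_of_subset (Finset.filter_subset _ _)]
          simp [Finset.card_univ]
        rw [e1, e2]
        have hle := excP_le σ
        have : ((X : Polynomial ℕ) ^ 2 + X) = X * (X + 1) := by ring
        rw [this, mul_pow, mul_assoc]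
        have h1x : (1 + (X : Polynomial ℕ)) = X + 1 := by ring
        have hn : excP σ + (n - excP σ) = n := by omega
        rw [h1x, ← pow_add, hn]

open Polynomial in
lemma count_eps {n : ℕ} (σ : Equiv.Perm (Fin n)) (m : ℕ) :
    (univ.filter fun ε : Fin n → Bool => fexcP (σ, ε) = m).card
      = Cz n ((m : ℤ) - excP σ) := by
  have hcoeff : ((∑ ε : Fin n → Bool, (X : Polynomial ℕ) ^ fexcP (σ, ε))).coeff m
      = (univ.filter fun ε : Fin n → Bool => fexcP (σ, ε) = m).card := by
    rw [Polynomial.finset_sum_coeff, Finset.card_filter]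
    apply Finset.sum_congr rfl
    intro ε _
    rw [Polynomial.coeff_X_pow]
    rcases Classical.em (fexcP (σ, ε) = m) with h | h
    · rw [if_pos h.symm, if_pos h]
    · rw [if_neg (fun hc => h hc.symm), if_neg h]
  rw [sum_pow_fexc, mul_comm, Polynomial.coeff_mul_X_pow'] at hcoeff
  unfold Cz
  by_cases hle : excP σ ≤ m
  · rw [if_pos hle] at hcoeff
    rw [Polynomial.coeff_X_add_one_pow] at hcoeff
    rw [if_pos (by omega)]
    have : ((m : ℤ) - (excP σ : ℤ)).toNat = m - excP σ := by omega
    rw [this]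
    exact_mod_cast hcoeff.symm
  · rw [if_neg hle] at hcoeff
    rw [if_neg (by omega)]
    exact_mod_cast hcoeff.symm

noncomputable def Fc (n m : ℕ) : ℕ := (univ.filter fun x : SP n => fexcP x = m).card

lemma Fc_eq_sum {n m : ℕ} : Fc n m = ∑ σ : Equiv.Perm (Fin n), Cz n ((m : ℤ) - excP σ) := by
  unfold Fc
  rw [Finset.card_filter, Fintype.sum_prod_type]
  apply Finset.sum_congr rfl
  intro σ _
  rw [← count_eps σ m, Finset.card_filter]

-- Part F : excedance-side recursion
lemma Cz_pascal (a : ℕ) (z : ℤ) : Cz a (z - 1) + Cz a z = Cz (a + 1) z := by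
  unfold Cz
  rcases lt_trichotomy z 0 with h | h | h
  · rw [if_neg (by omega), if_neg (by omega), if_neg (by omega)]
  · subst h
    rw [if_neg (by omega), if_pos (by omega), if_pos (by omega)]
    simp
  · rw [if_pos (by omega), if_pos (by omega), if_pos (by omega)]
    have h1 : z.toNat = (z - 1).toNat + 1 := by omega
    rw [h1, Nat.choose_succ_succ']

lemma Cz_absorb (N : ℕ) (m : ℤ) : m * Cz N m = ((N : ℤ) - m + 1) * Cz N (m - 1) := by
  unfold Cz
  rcases lt_trichotomy m 0 with h | h | h
  · rw [if_neg (by omega), if_neg (by omega)]; ring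
  · subst h
    rw [if_pos (by omega), if_neg (by omega)]; ring
  · rw [if_pos (by omega), if_pos (by omega)]
    have h1 : m.toNat = (m - 1).toNat + 1 := by omega
    by_cases hle : (m - 1).toNat ≤ N
    · have key := Nat.choose_succ_right_eq N ((m - 1).toNat)
      have keyz : ((N.choose ((m - 1).toNat + 1) : ℕ) : ℤ) * (((m - 1).toNat : ℕ) + 1 : ℤ)
          = ((N.choose ((m - 1).toNat) : ℕ) : ℤ) * (((N - (m - 1).toNat : ℕ) : ℕ) : ℤ) := by
        exact_mod_cast congrArg (fun t : ℕ => (t : ℤ)) key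
      rw [h1]
      have hc1 : (((m - 1).toNat : ℕ) + 1 : ℤ) = m := by omega
      have hc2 : (((N - (m - 1).toNat : ℕ) : ℕ) : ℤ) = (N : ℤ) - m + 1 := by omega
      rw [hc1, hc2] at keyz
      linarith [keyz]
    · have h2 : N < (m - 1).toNat := by omega
      rw [Nat.choose_eq_zero_of_lt (show N < m.toNat by omega),
        Nat.choose_eq_zero_of_lt (show N < (m - 1).toNat by omega)]
      ring

lemma key_binom (n : ℕ) (k : ℕ) (e : ℕ) :
    ((e : ℤ) + 1) * Cz (n + 2) (2 * k - e) + ((n : ℤ) - e) * Cz (n + 2) (2 * k - e - 1)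
      = (2 * (k : ℤ) + 1) * Cz (n + 1) (2 * k - e)
        + (2 * (n : ℤ) + 3 - 2 * k) * Cz (n + 1) (2 * k - e - 2) := by
  set m : ℤ := 2 * (k : ℤ) - e with hm
  have p1 : (Cz (n + 2) m : ℤ) = Cz (n + 1) (m - 1) + Cz (n + 1) m := by
    rw [← Cz_pascal (n + 1) m]; push_cast; ring
  have p2 : (Cz (n + 2) (m - 1) : ℤ) = Cz (n + 1) (m - 2) + Cz (n + 1) (m - 1) := by
    rw [show m - 2 = (m - 1) - 1 by ring, ← Cz_pascal (n + 1) (m - 1)]; push_cast; ring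
  have a1 := Cz_absorb (n + 1) m
  have a2 := Cz_absorb (n + 1) (m - 1)
  rw [show m - 1 - 1 = m - 2 by ring] at a2
  have he : (e : ℤ) = 2 * (k : ℤ) - m := by omega
  rw [p1, p2, he]
  push_cast at a1 a2 ⊢
  linarith [a1, a2]

lemma exc_inv_count {n : ℕ} (τ : Equiv.Perm (Fin n)) :
    (univ.filter fun j => τ⁻¹ j < j).card = excP τ := by
  unfold excP
  apply Finset.card_bij' (fun j _ => τ⁻¹ j) (fun q _ => τ q)
  · intro a ha
    simp only [mem_filter, mem_univ, true_and] at ha ⊢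
    simpa using ha
  · intro a ha
    simp only [mem_filter, mem_univ, true_and] at ha ⊢
    simpa using ha
  · intro a _; simp
  · intro a _; simp

lemma excP_decompose_zero {n : ℕ} (τ : Equiv.Perm (Fin n)) :
    excP (Equiv.Perm.decomposeFin.symm ((0 : Fin (n + 1)), τ)) = excP τ := by
  unfold excP
  rw [Finset.card_filter, Finset.card_filter, Fin.sum_univ_succ]
  rw [Equiv.Perm.decomposeFin_symm_apply_zero]
  simp only [lt_self_iff_false, if_false]
  have : ∀ i : Fin n, (if i.succ < Equiv.Perm.decomposeFin.symm ((0 : Fin (n+1)), τ) i.succ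
      then (1:ℕ) else 0) = if i < τ i then 1 else 0 := by
    intro i
    rw [Equiv.Perm.decomposeFin_symm_apply_succ, Equiv.swap_self]
    simp only [Equiv.refl_apply]
    by_cases h : i < τ i
    · exact (if_pos (Fin.succ_lt_succ_iff.2 h)).trans (if_pos h).symm
    · exact (if_neg (fun hc => h (Fin.succ_lt_succ_iff.1 hc))).trans (if_neg h).symm
  rw [Finset.sum_congr rfl (fun i _ => this i)]
  omega

lemma excP_decompose_succ {n : ℕ} (τ : Equiv.Perm (Fin n)) (j : Fin n) :
    excP (Equiv.Perm.decomposeFin.symm (j.succ, τ))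
      = excP τ + (if τ⁻¹ j < j then 0 else 1) := by
  unfold excP
  rw [Finset.card_filter, Fin.sum_univ_succ]
  rw [Equiv.Perm.decomposeFin_symm_apply_zero]
  have h0 : (if (0 : Fin (n+1)) < j.succ then (1:ℕ) else 0) = 1 := by
    rw [if_pos (Fin.succ_pos j)]
  rw [h0]
  set i₀ := τ⁻¹ j with hi₀
  have hτi₀ : τ i₀ = j := by simp [hi₀]
  have hterm : ∀ i : Fin n, (if i.succ < Equiv.Perm.decomposeFin.symm (j.succ, τ) i.succ
      then (1:ℕ) else 0) = if i = i₀ then 0 else (if i < τ i then 1 else 0) := by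
    intro i
    rw [Equiv.Perm.decomposeFin_symm_apply_succ]
    by_cases hij : i = i₀
    · subst hij
      rw [hτi₀, Equiv.swap_apply_right, if_pos rfl]
      rw [if_neg (Fin.not_lt_zero _)]
    · have hne : τ i ≠ j := fun hc => hij (by rw [hi₀, ← hc]; simp)
      rw [Equiv.swap_apply_of_ne_of_ne (Fin.succ_ne_zero _) (by
        intro hc
        exact hne (Fin.succ_injective _ hc))]
      rw [if_neg hij]
      by_cases h : i < τ i
      · rw [if_pos (Fin.succ_lt_succ_iff.2 h), if_pos h]
      · rw [if_neg (fun hc => h (Fin.succ_lt_succ_iff.1 hc)), if_neg h]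
  rw [Finset.sum_congr rfl (fun i _ => hterm i)]
  rw [Finset.sum_eq_sum_sdiff_singleton_add (Finset.mem_univ i₀)
    (fun i => if i = i₀ then (0:ℕ) else (if i < τ i then 1 else 0))]
  rw [if_pos rfl]
  have hsum2 : ∑ i ∈ univ \ {i₀}, (if i = i₀ then (0:ℕ) else (if i < τ i then 1 else 0))
      = ∑ i ∈ univ \ {i₀}, (if i < τ i then (1:ℕ) else 0) := by
    apply Finset.sum_congr rfl
    intro i hi
    simp only [Finset.mem_sdiff, Finset.mem_singleton] at hi
    rw [if_neg hi.2]
  rw [hsum2]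
  have hexc : (univ.filter fun i => i < τ i).card
      = (∑ i ∈ univ \ {i₀}, (if i < τ i then (1:ℕ) else 0))
        + (if i₀ < τ i₀ then (1:ℕ) else 0) := by
    rw [Finset.card_filter]
    exact Finset.sum_eq_sum_sdiff_singleton_add (Finset.mem_univ i₀) _
  rw [hexc, hτi₀]
  rcases Classical.em (i₀ < j) with h | h
  · rw [if_pos h, if_pos h]
    omega
  · rw [if_neg h, if_neg h]
    omega

noncomputable def Gc (n k : ℕ) : ℕ :=
  ∑ σ : Equiv.Perm (Fin n), Cz (n + 1) (2 * (k : ℤ) - excP σ)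

lemma inner_p_sum {n k : ℕ} (τ : Equiv.Perm (Fin n)) :
    ∑ p : Fin (n + 1), Cz (n + 2) (2 * (k : ℤ)
        - excP (Equiv.Perm.decomposeFin.symm (p, τ)))
      = (excP τ + 1) * Cz (n + 2) (2 * (k : ℤ) - excP τ)
        + (n - excP τ) * Cz (n + 2) (2 * (k : ℤ) - excP τ - 1) := by
  rw [Fin.sum_univ_succ, excP_decompose_zero]
  have hj : ∀ j : Fin n, Cz (n + 2) (2 * (k : ℤ)
        - excP (Equiv.Perm.decomposeFin.symm (j.succ, τ)))
      = if τ⁻¹ j < j then Cz (n + 2) (2 * (k : ℤ) - excP τ)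
        else Cz (n + 2) (2 * (k : ℤ) - excP τ - 1) := by
    intro j
    rw [excP_decompose_succ]
    by_cases h : τ⁻¹ j < j
    · rw [if_pos h, if_pos h]
      norm_num
    · rw [if_neg h, if_neg h]
      have hc : ((excP τ + 1 : ℕ) : ℤ) = (excP τ : ℤ) + 1 := by push_cast; ring
      rw [hc]
      congr 1
      ring
  rw [Finset.sum_congr rfl (fun j _ => hj j), Finset.sum_ite, Finset.sum_const,
    Finset.sum_const, exc_inv_count]
  have hcard : (univ.filter fun j => ¬ τ⁻¹ j < j).card = n - excP τ := by
    rw [Finset.filter_not, Finset.card_sdiff_of_subset (Finset.filter_subset _ _), exc_inv_count]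
    simp [Finset.card_univ]
  rw [hcard, smul_eq_mul, smul_eq_mul]
  ring

lemma Gc_step {n k : ℕ} :
    Gc (n + 1) k = ∑ τ : Equiv.Perm (Fin n),
      ((excP τ + 1) * Cz (n + 2) (2 * (k : ℤ) - excP τ)
        + (n - excP τ) * Cz (n + 2) (2 * (k : ℤ) - excP τ - 1)) := by
  unfold Gc
  rw [← Equiv.sum_comp (Equiv.Perm.decomposeFin (n := n)).symm
    (fun σ : Equiv.Perm (Fin (n + 1)) => Cz (n + 1 + 1) (2 * (k : ℤ) - excP σ))]
  rw [Fintype.sum_prod_type, Finset.sum_comm]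
  apply Finset.sum_congr rfl
  intro τ _
  exact inner_p_sum (n := n) (k := k) τ

lemma Gc_rec {n k : ℕ} (hk : 1 ≤ k) :
    (Gc (n + 1) k : ℤ) = (2 * (k : ℤ) + 1) * Gc n k
      + (2 * (n : ℤ) + 3 - 2 * (k : ℤ)) * Gc n (k - 1) := by
  rw [Gc_step, Nat.cast_sum]
  have hpt : ∀ τ : Equiv.Perm (Fin n),
      (((excP τ + 1) * Cz (n + 2) (2 * (k : ℤ) - excP τ)
        + (n - excP τ) * Cz (n + 2) (2 * (k : ℤ) - excP τ - 1) : ℕ) : ℤ)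
      = (2 * (k : ℤ) + 1) * Cz (n + 1) (2 * (k : ℤ) - excP τ)
        + (2 * (n : ℤ) + 3 - 2 * (k : ℤ)) * Cz (n + 1) (2 * (k : ℤ) - excP τ - 2) := by
    intro τ
    have hle := excP_le τ
    push_cast [Nat.cast_sub hle]
    exact key_binom n k (excP τ)
  rw [Finset.sum_congr rfl (fun τ _ => hpt τ), Finset.sum_add_distrib]
  unfold Gc
  rw [Nat.cast_sum, Nat.cast_sum, Finset.mul_sum, Finset.mul_sum]
  congr 1
  apply Finset.sum_congr rfl
  intro τ _
  congr 2
  have : ((k - 1 : ℕ) : ℤ) = (k : ℤ) - 1 := by omega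
  rw [this]
  ring

lemma Gc_zero {n : ℕ} : Gc (n + 1) 0 = Gc n 0 := by
  rw [Gc_step]
  unfold Gc
  apply Finset.sum_congr rfl
  intro τ _
  have h0 : (2 * ((0 : ℕ) : ℤ)) = 0 := by norm_num
  rcases Nat.eq_zero_or_pos (excP τ) with he | he
  · rw [he]
    unfold Cz
    norm_num
  · have h1 : Cz (n + 2) (2 * ((0 : ℕ) : ℤ) - excP τ) = 0 := by
      unfold Cz
      rw [if_neg (by push_cast; omega)]
    have h2 : Cz (n + 2) (2 * ((0 : ℕ) : ℤ) - excP τ - 1) = 0 := by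
      unfold Cz
      rw [if_neg (by push_cast; omega)]
    have h3 : Cz (n + 1) (2 * ((0 : ℕ) : ℤ) - excP τ) = 0 := by
      unfold Cz
      rw [if_neg (by push_cast; omega)]
    rw [h1, h2, h3]
    ring

-- Part G : insertion machinery and descent recursion
noncomputable def unemb {n : ℕ} (p i : Fin (n + 1)) (h : i ≠ p) : Fin n :=
  (Fin.exists_succAbove_eq h).choose

lemma unemb_spec {n : ℕ} (p i : Fin (n + 1)) (h : i ≠ p) :
    p.succAbove (unemb p i h) = i :=
  (Fin.exists_succAbove_eq h).choose_spec

noncomputable def insP {n : ℕ} (p : Fin (n + 1)) (τ : Equiv.Perm (Fin n)) :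
    Equiv.Perm (Fin (n + 1)) :=
  Equiv.ofBijective
    (fun i => if h : i = p then Fin.last n else (τ (unemb p i h)).castSucc)
    ((Finite.injective_iff_bijective).1 (by
      intro a b hab
      dsimp only at hab
      by_cases ha : a = p <;> by_cases hb : b = p
      · rw [ha, hb]
      · rw [dif_pos ha, dif_neg hb] at hab
        exact absurd hab.symm (Fin.castSucc_lt_last _).ne
      · rw [dif_neg ha, dif_pos hb] at hab
        exact absurd hab (Fin.castSucc_lt_last _).ne
      · rw [dif_neg ha, dif_neg hb] at hab
        have h1 : τ (unemb p a ha) = τ (unemb p b hb) := Fin.castSucc_injective _ hab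
        have h2 : unemb p a ha = unemb p b hb := τ.injective h1
        have := congrArg p.succAbove h2
        rwa [unemb_spec, unemb_spec] at this))

lemma insP_apply_same {n : ℕ} (p : Fin (n + 1)) (τ : Equiv.Perm (Fin n)) :
    insP p τ p = Fin.last n := by
  unfold insP
  rw [Equiv.ofBijective_apply, dif_pos rfl]

lemma insP_apply_succAbove {n : ℕ} (p : Fin (n + 1)) (τ : Equiv.Perm (Fin n)) (j : Fin n) :
    insP p τ (p.succAbove j) = (τ j).castSucc := by
  unfold insP
  rw [Equiv.ofBijective_apply, dif_neg (Fin.succAbove_ne p j)]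
  congr 1
  apply congrArg
  apply Fin.succAbove_right_injective (p := p)
  rw [unemb_spec]

lemma insertNth_same' {α : Type} {n : ℕ} (p : Fin (n + 1)) (v : α) (f : Fin n → α) :
    Fin.insertNth (α := fun _ => α) p v f p = v :=
  Fin.insertNth_apply_same (α := fun _ => α) p v f

lemma insertNth_sa' {α : Type} {n : ℕ} (p : Fin (n + 1)) (v : α) (f : Fin n → α) (j : Fin n) :
    Fin.insertNth (α := fun _ => α) p v f (p.succAbove j) = f j :=
  Fin.insertNth_apply_succAbove (α := fun _ => α) p v f j

noncomputable def insSP {n : ℕ} (y : SP n × (Fin (n + 1) × Bool)) : SP (n + 1) :=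
  (insP y.2.1 y.1.1, Fin.insertNth y.2.1 y.2.2 y.1.2)

lemma wrd_insSP {n : ℕ} (x : SP n) (p : Fin (n + 1)) (b : Bool) :
    wrd (insSP (x, (p, b))) = Fin.insertNth p (if b then ((n : ℤ) + 1) else -((n : ℤ) + 1)) (wrd x) := by
  funext i
  refine Fin.succAboveCases p ?_ ?_ i
  · rw [insertNth_same']
    show (if (Fin.insertNth (α := fun _ => Bool) p b x.2) p = true
        then ((insP p x.1 p : ℕ) : ℤ) + 1 else -(((insP p x.1 p : ℕ) : ℤ) + 1)) = _
    rw [insertNth_same', insP_apply_same, Fin.val_last]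
    try rcases b with _ | _ <;> simp
  · intro j
    rw [insertNth_sa']
    show (if (Fin.insertNth (α := fun _ => Bool) p b x.2) (p.succAbove j) = true
        then ((insP p x.1 (p.succAbove j) : ℕ) : ℤ) + 1
        else -(((insP p x.1 (p.succAbove j) : ℕ) : ℤ) + 1)) = wrd x j
    rw [insertNth_sa', insP_apply_succAbove, Fin.coe_castSucc]
    rfl

lemma insSP_bijective {n : ℕ} : Function.Bijective (insSP (n := n)) := by
  constructor
  · rintro ⟨x, p, b⟩ ⟨x', p', b'⟩ h
    have h1 : (insSP (x, (p, b))).1 = (insSP (x', (p', b'))).1 := congrArg Prod.fst h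
    have h2 : (insSP (x, (p, b))).2 = (insSP (x', (p', b'))).2 := congrArg Prod.snd h
    have hpp : p = p' := by
      have e1 : (insSP (x, (p, b))).1 p = Fin.last n := insP_apply_same p x.1
      have e2 : (insSP (x', (p', b'))).1 p' = Fin.last n := insP_apply_same p' x'.1
      rw [h1] at e1
      exact ((insSP (x', (p', b'))).1).injective (e1.trans e2.symm)
    subst hpp
    have hτ : x.1 = x'.1 := by
      apply Equiv.ext
      intro j
      have e1 : (insSP (x, (p, b))).1 (p.succAbove j) = (x.1 j).castSucc :=
        insP_apply_succAbove p x.1 j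
      have e2 : (insSP (x', (p, b'))).1 (p.succAbove j) = (x'.1 j).castSucc :=
        insP_apply_succAbove p x'.1 j
      rw [h1] at e1
      exact Fin.castSucc_injective _ (e1.symm.trans e2)
    have hb : b = b' := by
      have e1 : (insSP (x, (p, b))).2 p = b := insertNth_same' p b x.2
      have e2 : (insSP (x', (p, b'))).2 p = b' := insertNth_same' p b' x'.2
      rw [h2] at e1
      exact e1.symm.trans e2
    have hε : x.2 = x'.2 := by
      funext j
      have e1 : (insSP (x, (p, b))).2 (p.succAbove j) = x.2 j :=
        insertNth_sa' p b x.2 j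
      have e2 : (insSP (x', (p, b'))).2 (p.succAbove j) = x'.2 j :=
        insertNth_sa' p b' x'.2 j
      rw [h2] at e1
      exact e1.symm.trans e2
    exact Prod.ext (Prod.ext hτ hε) (Prod.ext rfl hb)
  · rintro ⟨σ, ε⟩
    set p : Fin (n + 1) := σ⁻¹ (Fin.last n) with hp
    have hσp : σ p = Fin.last n := by rw [hp]; simp
    have hne : ∀ j : Fin n, σ (p.succAbove j) ≠ Fin.last n := by
      intro j hc
      have := σ.injective (hc.trans hσp.symm)
      exact Fin.succAbove_ne p j this
    set g : Fin n → Fin n := fun j => (σ (p.succAbove j)).castPred (hne j) with hg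
    have ginj : Function.Injective g := by
      intro a b hab
      have : σ (p.succAbove a) = σ (p.succAbove b) := by
        have := congrArg Fin.castSucc hab
        rwa [Fin.castSucc_castPred, Fin.castSucc_castPred] at this
      exact Fin.succAbove_right_injective (σ.injective this)
    have gbij : Function.Bijective g := (Finite.injective_iff_bijective).1 ginj
    refine ⟨((Equiv.ofBijective g gbij,
      fun j => ε (p.succAbove j)), (p, ε p)), ?_⟩
    unfold insSP
    refine Prod.ext (Equiv.ext ?_) ?_
    · intro i
      refine Fin.succAboveCases p ?_ ?_ i
      · rw [insP_apply_same, hσp]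
      · intro j
        rw [insP_apply_succAbove]
        show ((Equiv.ofBijective g gbij) j).castSucc = _
        rw [Equiv.ofBijective_apply, hg]
        simp only
        rw [Fin.castSucc_castPred]
    · funext i
      refine Fin.succAboveCases p ?_ ?_ i
      · exact insertNth_same' p (ε p) (fun j => ε (p.succAbove j))
      · intro j
        exact insertNth_sa' p (ε p) (fun j => ε (p.succAbove j)) j

-- positional value lemmas
lemma insert_val_low {m : ℕ} (g : Fin (m + 1) → ℤ) (j : Fin (m + 1)) (x : ℤ)
    (r : Fin (m + 1)) (hr : (r : ℕ) ≤ (j : ℕ)) :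
    Fin.insertNth (α := fun _ => ℤ) j.succ x g r.castSucc = g r := by
  have h1 : j.succ.succAbove r = r.castSucc :=
    Fin.succAbove_of_castSucc_lt _ _ (by
      rw [Fin.lt_def]
      simp [Fin.val_succ]
      omega)
  rw [← h1, insertNth_sa']

lemma insert_val_high {m : ℕ} (g : Fin (m + 1) → ℤ) (j : Fin (m + 1)) (x : ℤ)
    (r : Fin (m + 1)) (hr : (j : ℕ) < (r : ℕ)) :
    Fin.insertNth (α := fun _ => ℤ) j.succ x g r.succ = g r := by
  have h1 : j.succ.succAbove r = r.succ :=
    Fin.succAbove_of_le_castSucc _ _ (by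
      rw [Fin.le_def]
      simp [Fin.val_succ]
      omega)
  rw [← h1, insertNth_sa']

lemma cons_insertNth {n : ℕ} (p : Fin (n + 1)) (v : ℤ) (V : Fin n → ℤ) :
    (Fin.cons 0 (Fin.insertNth (α := fun _ => ℤ) p v V) : Fin (n + 2) → ℤ)
      = Fin.insertNth (α := fun _ => ℤ) p.succ v (Fin.cons 0 V) := by
  funext r
  refine Fin.cases ?_ ?_ r
  · rw [Fin.cons_zero]
    have h0 : p.succ.succAbove 0 = (0 : Fin (n + 2)) := by
      rw [Fin.succAbove_of_castSucc_lt _ _ (by simp [Fin.lt_def])]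
      rfl
    rw [← h0, insertNth_sa', Fin.cons_zero]
  · intro i
    rw [Fin.cons_succ]
    refine Fin.succAboveCases p ?_ ?_ i
    · rw [insertNth_same', insertNth_same']
    · intro j
      rw [insertNth_sa', ← Fin.succ_succAbove_succ, insertNth_sa', Fin.cons_succ]

lemma desc_insert {m : ℕ} (g : Fin (m + 1) → ℤ) (j : Fin (m + 1)) (x : ℤ)
    (hx : (∀ r, g r < x) ∨ (∀ r, x < g r)) :
    desc (Fin.insertNth (α := fun _ => ℤ) j.succ x g)
      = desc g + (if h : (j : ℕ) < m
          then (if g (⟨(j : ℕ), h⟩ : Fin m).succ < g (⟨(j : ℕ), h⟩ : Fin m).castSucc then 0 else 1)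
          else (if (∀ r, g r < x) then 0 else 1)) := by
  set h' : Fin (m + 2) → ℤ := Fin.insertNth (α := fun _ => ℤ) j.succ x g with hh
  have hPb : h' j.succ = x := insertNth_same' _ _ _
  unfold desc
  rw [Finset.card_filter, Finset.card_filter]
  rw [Fin.sum_univ_succAbove (fun i : Fin (m + 1) =>
    if h' i.succ < h' i.castSucc then (1 : ℕ) else 0) j]
  have hFj : (if h' j.succ < h' j.castSucc then (1 : ℕ) else 0)
      = if (∀ r, g r < x) then 0 else 1 := by
    have e1 : h' j.castSucc = g j := insert_val_low g j x j le_rfl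
    rw [hPb, e1]
    rcases hx with hx | hx
    · rw [if_neg (by have := hx j; omega), if_pos hx]
    · rw [if_pos (hx j), if_neg (by intro hc; have := hc j; have := hx j; omega)]
  have hterm : ∀ i : Fin m, (if h' (j.succAbove i).succ < h' (j.succAbove i).castSucc
      then (1 : ℕ) else 0)
      = if (i : ℕ) = (j : ℕ) then (if (∀ r, g r < x) then 1 else 0)
        else (if g i.succ < g i.castSucc then 1 else 0) := by
    intro i
    rcases lt_trichotomy ((i : ℕ)) ((j : ℕ)) with hlt | heq | hgt
    · have hsa : j.succAbove i = i.castSucc :=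
        Fin.succAbove_of_castSucc_lt _ _ (by rwa [Fin.lt_def])
      rw [hsa]
      have e1 : h' i.castSucc.castSucc = g i.castSucc :=
        insert_val_low g j x i.castSucc (by simp; omega)
      have e2 : h' i.castSucc.succ = g i.succ := by
        rw [Fin.succ_castSucc]
        exact insert_val_low g j x i.succ (by simp [Fin.val_succ]; omega)
      rw [e1, e2, if_neg (show ¬ ((i : ℕ) = (j : ℕ)) by omega)]
    · have hsa : j.succAbove i = i.succ :=
        Fin.succAbove_of_le_castSucc _ _ (by rw [Fin.le_def]; simp; omega)
      rw [hsa]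
      have e1 : h' i.succ.castSucc = x := by
        have : i.succ.castSucc = j.succ := by
          rw [Fin.ext_iff]
          simp [Fin.val_succ]
          omega
        rw [this, hPb]
      have e2 : h' i.succ.succ = g i.succ :=
        insert_val_high g j x i.succ (by simp [Fin.val_succ]; omega)
      rw [e1, e2, if_pos heq]
      rcases hx with hx | hx
      · rw [if_pos (hx i.succ), if_pos hx]
      · rw [if_neg (by have := hx i.succ; omega),
          if_neg (by intro hc; have := hc i.succ; have := hx i.succ; omega)]
    · have hsa : j.succAbove i = i.succ :=
        Fin.succAbove_of_le_castSucc _ _ (by rw [Fin.le_def]; simp; omega)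
      rw [hsa]
      have e1 : h' i.succ.castSucc = g i.castSucc := by
        rw [← Fin.succ_castSucc]
        exact insert_val_high g j x i.castSucc (by simp; omega)
      have e2 : h' i.succ.succ = g i.succ :=
        insert_val_high g j x i.succ (by simp [Fin.val_succ]; omega)
      rw [e1, e2, if_neg (show ¬ ((i : ℕ) = (j : ℕ)) by omega)]
  rw [Finset.sum_congr rfl (fun i _ => hterm i), hFj]
  by_cases hjm : (j : ℕ) < m
  · set jm : Fin m := ⟨(j : ℕ), hjm⟩ with hjmdef
    rw [dif_pos hjm, ← hjmdef]
    have hsplit1 : ∑ i : Fin m, (if (i : ℕ) = (j : ℕ) then (if (∀ r, g r < x) then (1:ℕ) else 0)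
        else (if g i.succ < g i.castSucc then 1 else 0))
        = (∑ i ∈ univ \ {jm}, (if g i.succ < g i.castSucc then (1:ℕ) else 0))
          + (if (∀ r, g r < x) then 1 else 0) := by
      rw [Finset.sum_eq_sum_sdiff_singleton_add (Finset.mem_univ jm)]
      rw [if_pos rfl]
      congr 1
      apply Finset.sum_congr rfl
      intro i hi
      simp only [Finset.mem_sdiff, Finset.mem_singleton] at hi
      rw [if_neg (by
        intro hc
        exact hi.2 (Fin.ext hc))]
    have hsplit2 : ∑ i : Fin m, (if g i.succ < g i.castSucc then (1:ℕ) else 0)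
        = (∑ i ∈ univ \ {jm}, (if g i.succ < g i.castSucc then (1:ℕ) else 0))
          + (if g jm.succ < g jm.castSucc then 1 else 0) := by
      exact Finset.sum_eq_sum_sdiff_singleton_add (Finset.mem_univ jm) _
    rw [hsplit1, hsplit2]
    rcases Classical.em (∀ r, g r < x) with hbig | hbig <;>
      rcases Classical.em (g jm.succ < g jm.castSucc) with hd | hd
    · rw [if_pos hbig, if_pos hbig, if_pos hd, if_pos hd]; omega
    · rw [if_pos hbig, if_pos hbig, if_neg hd, if_neg hd]; omega
    · rw [if_neg hbig, if_neg hbig, if_pos hd, if_pos hd]; omega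
    · rw [if_neg hbig, if_neg hbig, if_neg hd, if_neg hd]; omega
  · rw [dif_neg hjm]
    have hnone : ∀ i : Fin m, ¬ ((i : ℕ) = (j : ℕ)) := by
      intro i hc
      have := i.isLt
      omega
    have : ∑ i : Fin m, (if (i : ℕ) = (j : ℕ) then (if (∀ r, g r < x) then (1:ℕ) else 0)
        else (if g i.succ < g i.castSucc then 1 else 0))
        = ∑ i : Fin m, (if g i.succ < g i.castSucc then (1:ℕ) else 0) := by
      apply Finset.sum_congr rfl
      intro i _
      rw [if_neg (hnone i)]
    rw [this]
    omega

noncomputable def gword {n : ℕ} (x : SP n) : Fin (n + 1) → ℤ := Fin.cons 0 (wrd x)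

lemma gword_lt {n : ℕ} (x : SP n) (r : Fin (n + 1)) :
    gword x r < (n : ℤ) + 1 ∧ -((n : ℤ) + 1) < gword x r := by
  unfold gword
  refine Fin.cases ?_ ?_ r
  · rw [Fin.cons_zero]; constructor <;> omega
  · intro i
    rw [Fin.cons_succ]
    have := wrd_abs_le x i
    rcases abs_cases (wrd x i) with ⟨e, _⟩ | ⟨e, _⟩ <;> constructor <;> omega

noncomputable def incr {n : ℕ} (x : SP n) (p : Fin (n + 1)) (b : Bool) : ℕ :=
  if h : (p : ℕ) < n
  then (if gword x (⟨(p : ℕ), h⟩ : Fin n).succ < gword x (⟨(p : ℕ), h⟩ : Fin n).castSucc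
    then 0 else 1)
  else (if b then 0 else 1)

lemma incr_le {n : ℕ} (x : SP n) (p : Fin (n + 1)) (b : Bool) : incr x p b ≤ 1 := by
  unfold incr
  split
  · split <;> omega
  · split <;> omega

lemma desP_insSP {n : ℕ} (x : SP n) (p : Fin (n + 1)) (b : Bool) :
    desP (insSP (x, (p, b))) = desP x + incr x p b := by
  unfold desP
  rw [wrd_insSP, cons_insertNth]
  rw [desc_insert (Fin.cons 0 (wrd x)) p _ (by
    rcases b with _ | _
    · right
      intro r
      simp only [Bool.false_eq_true, if_false]
      exact (gword_lt x r).2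
    · left
      intro r
      simp only [if_true]
      exact (gword_lt x r).1)]
  congr 1
  unfold incr gword
  by_cases h : (p : ℕ) < n
  · rw [dif_pos h, dif_pos h]
  · rw [dif_neg h, dif_neg h]
    rcases b with _ | _
    · rw [if_neg (by
        intro hc
        have := hc 0
        rw [Fin.cons_zero] at this
        simp only [Bool.false_eq_true, if_false] at this
        omega)]
      rfl
    · rw [if_pos (by
        intro r
        simp only [if_true]
        exact (gword_lt x r).1)]
      rfl

lemma desP_le {n : ℕ} (x : SP n) : desP x ≤ n := by
  unfold desP desc
  calc _ ≤ (univ : Finset (Fin n)).card := Finset.card_filter_le _ _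
    _ = n := by simp

lemma count_incr0 {n : ℕ} (x : SP n) :
    (univ.filter fun pb : Fin (n + 1) × Bool => incr x pb.1 pb.2 = 0).card
      = 2 * desP x + 1 := by
  rw [Finset.card_filter, Fintype.sum_prod_type]
  have hp : ∀ p : Fin (n + 1), (∑ b : Bool, if incr x p b = 0 then (1 : ℕ) else 0)
      = if h : (p : ℕ) < n
        then (if gword x (⟨(p : ℕ), h⟩ : Fin n).succ < gword x (⟨(p : ℕ), h⟩ : Fin n).castSucc
          then 2 else 0)
        else 1 := by
    intro p
    rw [Fintype.sum_bool]
    unfold incr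
    by_cases h : (p : ℕ) < n
    · rw [dif_pos h, dif_pos h, dif_pos h]
      split <;> simp
    · rw [dif_neg h, dif_neg h, dif_neg h]
      simp
  rw [Finset.sum_congr rfl (fun p _ => hp p)]
  rw [Fin.sum_univ_castSucc]
  have hlast : (if h : ((Fin.last n : Fin (n + 1)) : ℕ) < n
      then (if gword x (⟨((Fin.last n : Fin (n + 1)) : ℕ), h⟩ : Fin n).succ
        < gword x (⟨((Fin.last n : Fin (n + 1)) : ℕ), h⟩ : Fin n).castSucc then 2 else 0)
      else 1) = 1 := by
    rw [dif_neg (by simp)]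
  rw [hlast]
  have hcs : ∀ i : Fin n, (if h : ((i.castSucc : Fin (n + 1)) : ℕ) < n
      then (if gword x (⟨((i.castSucc : Fin (n + 1)) : ℕ), h⟩ : Fin n).succ
        < gword x (⟨((i.castSucc : Fin (n + 1)) : ℕ), h⟩ : Fin n).castSucc then 2 else 0)
      else 1)
      = 2 * (if gword x i.succ < gword x i.castSucc then 1 else 0) := by
    intro i
    have hi : ((i.castSucc : Fin (n + 1)) : ℕ) < n := by simp
    rw [dif_pos hi]
    have hieq : (⟨((i.castSucc : Fin (n + 1)) : ℕ), hi⟩ : Fin n) = i := by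
      apply Fin.ext
      simp
    rw [hieq]
    split <;> simp
  rw [Finset.sum_congr rfl (fun i _ => hcs i), ← Finset.mul_sum]
  have : ∑ i : Fin n, (if gword x i.succ < gword x i.castSucc then (1:ℕ) else 0) = desP x := by
    unfold desP desc gword
    rw [Finset.card_filter]
  rw [this]

lemma count_incr1 {n : ℕ} (x : SP n) :
    (univ.filter fun pb : Fin (n + 1) × Bool => incr x pb.1 pb.2 = 1).card
      = 2 * (n - desP x) + 1 := by
  have h1 : (univ.filter fun pb : Fin (n + 1) × Bool => incr x pb.1 pb.2 = 1)
      = (univ.filter fun pb : Fin (n + 1) × Bool => ¬ (incr x pb.1 pb.2 = 0)) := by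
    apply Finset.filter_congr
    intro pb _
    have := incr_le x pb.1 pb.2
    constructor
    · intro h; omega
    · intro h; omega
  rw [h1, Finset.filter_not, Finset.card_sdiff_of_subset (Finset.filter_subset _ _), count_incr0]
  have h2 : (univ : Finset (Fin (n + 1) × Bool)).card = 2 * (n + 1) := by
    simp [Finset.card_univ]
    ring
  rw [h2]
  have := desP_le x
  omega

noncomputable def Dc (n k : ℕ) : ℕ := (univ.filter fun x : SP n => desP x = k).card

lemma Dc_sum {n k : ℕ} : Dc (n + 1) k
    = ∑ x : SP n, ((if desP x = k then 2 * desP x + 1 else 0)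
      + (if desP x + 1 = k then 2 * (n - desP x) + 1 else 0)) := by
  unfold Dc
  rw [Finset.card_filter]
  rw [← Equiv.sum_comp (Equiv.ofBijective insSP insSP_bijective)
    (fun y : SP (n + 1) => if desP y = k then (1 : ℕ) else 0)]
  rw [Fintype.sum_prod_type]
  apply Finset.sum_congr rfl
  intro x _
  have hpt : ∀ pb : Fin (n + 1) × Bool,
      (if desP ((Equiv.ofBijective insSP insSP_bijective) (x, pb)) = k then (1:ℕ) else 0)
      = if desP x + incr x pb.1 pb.2 = k then 1 else 0 := by
    intro pb
    rw [Equiv.ofBijective_apply]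
    have : insSP (x, pb) = insSP (x, (pb.1, pb.2)) := by rfl
    rw [this, desP_insSP]
  rw [Finset.sum_congr rfl (fun pb _ => hpt pb)]
  by_cases hk1 : desP x = k
  · rw [if_pos hk1, if_neg (by omega)]
    have : ∀ pb : Fin (n + 1) × Bool, (if desP x + incr x pb.1 pb.2 = k then (1:ℕ) else 0)
        = if incr x pb.1 pb.2 = 0 then 1 else 0 := by
      intro pb
      have := incr_le x pb.1 pb.2
      by_cases h : incr x pb.1 pb.2 = 0
      · rw [if_pos (by omega), if_pos h]
      · rw [if_neg (by omega), if_neg h]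
    rw [Finset.sum_congr rfl (fun pb _ => this pb), ← Finset.card_filter, count_incr0]
  · by_cases hk2 : desP x + 1 = k
    · rw [if_neg hk1, if_pos hk2]
      have : ∀ pb : Fin (n + 1) × Bool, (if desP x + incr x pb.1 pb.2 = k then (1:ℕ) else 0)
          = if incr x pb.1 pb.2 = 1 then 1 else 0 := by
        intro pb
        have := incr_le x pb.1 pb.2
        by_cases h : incr x pb.1 pb.2 = 1
        · rw [if_pos (by omega), if_pos h]
        · rw [if_neg (by omega), if_neg h]
      rw [Finset.sum_congr rfl (fun pb _ => this pb), ← Finset.card_filter, count_incr1]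
      omega
    · rw [if_neg hk1, if_neg hk2]
      have hz : ∑ pb : Fin (n + 1) × Bool,
          (if desP x + incr x pb.1 pb.2 = k then (1:ℕ) else 0) = 0 := by
        apply Finset.sum_eq_zero
        intro pb _
        have := incr_le x pb.1 pb.2
        rw [if_neg (by omega)]
      rw [hz]

lemma Dc_zero {n : ℕ} : Dc (n + 1) 0 = Dc n 0 := by
  rw [Dc_sum]
  unfold Dc
  rw [Finset.card_filter]
  apply Finset.sum_congr rfl
  intro x _
  by_cases h : desP x = 0
  · rw [if_pos h, if_neg (by omega), if_pos h, h]
  · rw [if_neg h, if_neg (by omega), if_neg h]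

lemma Dc_rec {n k : ℕ} : (Dc (n + 1) (k + 1) : ℤ)
    = (2 * ((k : ℤ) + 1) + 1) * Dc n (k + 1)
      + (2 * (n : ℤ) + 3 - 2 * ((k : ℤ) + 1)) * Dc n k := by
  rw [Dc_sum, Nat.cast_sum]
  have hpt : ∀ x : SP n, (((if desP x = k + 1 then 2 * desP x + 1 else 0)
        + (if desP x + 1 = k + 1 then 2 * (n - desP x) + 1 else 0) : ℕ) : ℤ)
      = (if desP x = k + 1 then (2 * ((k : ℤ) + 1) + 1) else 0)
        + (if desP x = k then (2 * (n : ℤ) + 3 - 2 * ((k : ℤ) + 1)) else 0) := by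
    intro x
    have hle := desP_le x
    push_cast
    congr 1
    · by_cases h : desP x = k + 1
      · rw [if_pos h, if_pos h, h]; push_cast; ring
      · rw [if_neg h, if_neg h]
    · by_cases h : desP x = k
      · rw [if_pos (by omega), if_pos h]
        have hkn : k ≤ n := by omega
        rw [Nat.cast_sub (by omega)]
        push_cast
        rw [h]
        ring
      · rw [if_neg (by omega), if_neg h]
  rw [Finset.sum_congr rfl (fun x _ => hpt x), Finset.sum_add_distrib]
  unfold Dc
  rw [Finset.card_filter, Finset.card_filter]
  push_cast
  congr 1
  · rw [Finset.mul_sum]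
    apply Finset.sum_congr rfl
    intro x _
    by_cases h : desP x = k + 1 <;> simp [h]
  · rw [Finset.mul_sum]
    apply Finset.sum_congr rfl
    intro x _
    by_cases h : desP x = k <;> simp [h]

lemma Dc_eq_Gc (n : ℕ) : ∀ k, Dc n k = Gc n k := by
  induction n with
  | zero =>
    intro k
    have hdes : ∀ x : SP 0, desP x = 0 := by
      intro x
      unfold desP desc
      simp
    have hexc : ∀ σ : Equiv.Perm (Fin 0), excP σ = 0 := by
      intro σ
      unfold excP
      simp
    unfold Dc Gc
    have hcard1 : (univ : Finset (Equiv.Perm (Fin 0))).card = 1 := by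
      simp [Finset.card_univ]
    have hG : ∑ σ : Equiv.Perm (Fin 0), Cz 1 (2 * (k : ℤ) - excP σ)
        = Cz 1 (2 * (k : ℤ)) := by
      have hpt : ∀ σ : Equiv.Perm (Fin 0),
          Cz 1 (2 * (k : ℤ) - excP σ) = Cz 1 (2 * (k : ℤ)) := by
        intro σ
        rw [hexc σ]
        norm_num
      rw [Finset.sum_congr rfl (fun σ _ => hpt σ), Finset.sum_const, hcard1, one_smul]
    rw [hG]
    rcases Nat.eq_zero_or_pos k with hk | hk
    · subst hk
      have : (univ.filter fun x : SP 0 => desP x = 0) = univ := by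
        apply Finset.filter_true_of_mem
        intro x _
        exact hdes x
      rw [this]
      have hcard : (univ : Finset (SP 0)).card = 1 := by
        simp [Finset.card_univ]
      rw [hcard]
      unfold Cz
      norm_num
    · have h1 : (univ.filter fun x : SP 0 => desP x = k) = ∅ := by
        apply Finset.filter_false_of_mem
        intro x _
        rw [hdes x]
        omega
      rw [h1]
      unfold Cz
      rw [if_pos (by omega)]
      rw [Nat.choose_eq_zero_of_lt (by omega)]
      simp
  | succ n ih =>
    intro k
    rcases k with _ | k
    · rw [Dc_zero, Gc_zero, ih]
    · have h1 := Dc_rec (n := n) (k := k)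
      have h2 := Gc_rec (n := n) (k := k + 1) (by omega)
      rw [ih, ih] at h1
      have h3 : (k + 1 - 1 : ℕ) = k := by omega
      rw [h3] at h2
      have h4 : ((k + 1 : ℕ) : ℤ) = (k : ℤ) + 1 := by push_cast; ring
      rw [h4] at h2
      have : (Dc (n + 1) (k + 1) : ℤ) = (Gc (n + 1) (k + 1) : ℤ) := by
        rw [h1, h2]
      exact_mod_cast this

-- Part H : assembly pieces
noncomputable def psi (n m : ℕ) : ℕ :=
  (univ.filter fun x : SP (n + 1) => inXP x ∧ fexcP x = m).card

lemma Fc_split {n m : ℕ} : Fc (n + 1) m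
    = psi n m + (univ.filter fun x : SP (n + 1) => ¬ inXP x ∧ fexcP x = m).card := by
  unfold Fc psi
  rw [Finset.card_filter, Finset.card_filter, Finset.card_filter, ← Finset.sum_add_distrib]
  apply Finset.sum_congr rfl
  intro x _
  by_cases h1 : inXP x <;> by_cases h2 : fexcP x = m <;>
    simp [h1, h2]

lemma notX_card {n m : ℕ} :
    (univ.filter fun x : SP (n + 1) => ¬ inXP x ∧ fexcP x = m + 1).card = psi n m := by
  unfold psi
  apply Finset.card_bij' (fun y _ => flip0 y) (fun x _ => flip0 x)
  · intro y hy
    simp only [mem_filter, mem_univ, true_and] at hy ⊢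
    obtain ⟨hy1, hy2⟩ := hy
    have hin : inXP (flip0 y) := (inXP_flip0 y).2 hy1
    refine ⟨hin, ?_⟩
    have := fexcP_flip0 (flip0 y) hin
    rw [flip0_invol] at this
    omega
  · intro x hx
    simp only [mem_filter, mem_univ, true_and] at hx ⊢
    obtain ⟨hx1, hx2⟩ := hx
    constructor
    · rw [inXP_flip0]
      exact not_not_intro hx1
    · rw [fexcP_flip0 x hx1, hx2]
  · intro y _
    exact flip0_invol y
  · intro x _
    exact flip0_invol x

lemma Gc_eq_Fc {n k : ℕ} (hk : 1 ≤ k) :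
    Gc n k = Fc n (2 * k - 1) + Fc n (2 * k) := by
  rw [Fc_eq_sum, Fc_eq_sum, ← Finset.sum_add_distrib]
  unfold Gc
  apply Finset.sum_congr rfl
  intro σ _
  have h1 : ((2 * k - 1 : ℕ) : ℤ) - excP σ = (2 * (k : ℤ) - excP σ) - 1 := by
    have : ((2 * k - 1 : ℕ) : ℤ) = 2 * (k : ℤ) - 1 := by omega
    rw [this]; ring
  have h2 : ((2 * k : ℕ) : ℤ) - excP σ = 2 * (k : ℤ) - excP σ := by push_cast; ring
  rw [h1, h2, Cz_pascal n (2 * (k : ℤ) - excP σ)]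

end SPm

/-- Corollary: type B Eulerian numbers from volumes.
For all `n ≥ 1` and `k ≥ 1`,
`B_{n,k} = #{w ∈ X_n : fexc w = 2k-2} + 2·#{w ∈ X_n : fexc w = 2k-1} + #{w ∈ X_n : fexc w = 2k}`. -/
theorem eulerianB_from_volumes (n k : ℕ) (hn : 1 ≤ n) (hk : 1 ≤ k) :
    {w : Equiv.Perm ℤ | IsSignedPerm n w ∧ desB n w = k}.ncard
      = {w : Equiv.Perm ℤ | InXn n w ∧ fexc n w = 2 * k - 2}.ncard
        + 2 * {w : Equiv.Perm ℤ | InXn n w ∧ fexc n w = 2 * k - 1}.ncard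
        + {w : Equiv.Perm ℤ | InXn n w ∧ fexc n w = 2 * k}.ncard := by
  classical
  obtain ⟨N, rfl⟩ : ∃ N, n = N + 1 := ⟨n - 1, by omega⟩
  have hL : {w : Equiv.Perm ℤ | IsSignedPerm (N + 1) w ∧ desB (N + 1) w = k}.ncard
      = SPm.Dc (N + 1) k := by
    have h0 : SPm.Dc (N + 1) k
        = (Finset.filter (fun x : SPm.SP (N + 1) => SPm.desP x = k) Finset.univ).card := rfl
    rw [h0]
    exact SPm.ncard_transfer (n := N + 1) (fun x => SPm.desP x = k)
      (fun w => desB (N + 1) w = k) (fun x => by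
        show desB (N + 1) (SPm.theta x) = k ↔ SPm.desP x = k
        rw [SPm.desB_theta])
  have hR : ∀ m : ℕ, {w : Equiv.Perm ℤ | InXn (N + 1) w ∧ fexc (N + 1) w = m}.ncard
      = SPm.psi N m := by
    intro m
    have hset : {w : Equiv.Perm ℤ | InXn (N + 1) w ∧ fexc (N + 1) w = m}
        = {w : Equiv.Perm ℤ | IsSignedPerm (N + 1) w
            ∧ (InXn (N + 1) w ∧ fexc (N + 1) w = m)} := by
      ext w
      simp only [Set.mem_setOf_eq]
      constructor
      · rintro ⟨h1, h2⟩
        exact ⟨h1.1, h1, h2⟩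
      · rintro ⟨-, h⟩
        exact h
    rw [hset]
    have h0 : SPm.psi N m
        = (Finset.filter (fun x : SPm.SP (N + 1) => SPm.inXP x ∧ SPm.fexcP x = m)
            Finset.univ).card := rfl
    rw [h0]
    exact SPm.ncard_transfer (n := N + 1)
      (fun x => SPm.inXP x ∧ SPm.fexcP x = m)
      (fun w => InXn (N + 1) w ∧ fexc (N + 1) w = m)
      (fun x => and_congr (SPm.inXn_theta x) (by
        show fexc (N + 1) (SPm.theta x) = m ↔ SPm.fexcP x = m
        rw [SPm.fexc_theta]))
  rw [hL, hR, hR, hR]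
  have e1 : SPm.Dc (N + 1) k = SPm.Gc (N + 1) k := SPm.Dc_eq_Gc (N + 1) k
  have e2 : SPm.Gc (N + 1) k = SPm.Fc (N + 1) (2 * k - 1) + SPm.Fc (N + 1) (2 * k) :=
    SPm.Gc_eq_Fc hk
  have e3 : SPm.Fc (N + 1) (2 * k - 1) = SPm.psi N (2 * k - 1) + SPm.psi N (2 * k - 2) := by
    have h1 := SPm.Fc_split (n := N) (m := 2 * k - 1)
    have h2 := SPm.notX_card (n := N) (m := 2 * k - 2)
    have h3 : 2 * k - 2 + 1 = 2 * k - 1 := by omega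
    rw [h3] at h2
    rw [h1, h2]
  have e4 : SPm.Fc (N + 1) (2 * k) = SPm.psi N (2 * k) + SPm.psi N (2 * k - 1) := by
    have h1 := SPm.Fc_split (n := N) (m := 2 * k)
    have h2 := SPm.notX_card (n := N) (m := 2 * k - 1)
    have h3 : 2 * k - 1 + 1 = 2 * k := by omega
    rw [h3] at h2
    rw [h1, h2]
  omega
end

section
/- For every n ≥ 1 and every signed permutation w ∈ 𝔅_n, 0 ≤ basc(w) ≤ n−1. Moreover, the minimum value is attained by exactly two signed permutations: #{w ∈ 𝔅_n : basc(w) = 0} = 2. -/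
open scoped Classical

namespace BRAM

def hmap (x : ℤ) : ℤ := if 0 < x then x - 1 else x

lemma lll_iff {a b : ℤ} (ha : a ≠ 0) (hb : b ≠ 0) :
    Lll a b ↔ hmap a + 2 ≤ hmap b := by
  constructor
  · rintro ⟨c, hc, h1, h2⟩
    simp only [hmap]; split_ifs <;> omega
  · intro h
    simp only [hmap] at h
    split_ifs at h with h1 h2 h2
    · exact ⟨a + 1, by omega, by omega, by omega⟩
    · exact ⟨a + 1, by omega, by omega, by omega⟩
    · refine ⟨if a = -1 then 1 else -1, ?_, ?_, ?_⟩ <;> split_ifs <;> omega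
    · exact ⟨a + 1, by omega, by omega, by omega⟩

lemma sp_zero {n : ℕ} {w : Equiv.Perm ℤ} (hw : IsSignedPerm n w) : w 0 = 0 := by
  have := hw.1 0
  simp only [neg_zero] at this
  omega

lemma sp_ne {n : ℕ} {w : Equiv.Perm ℤ} (hw : IsSignedPerm n w) {i : ℤ} (hi : i ≠ 0) :
    w i ≠ 0 := by
  intro h
  exact hi (w.injective (h.trans (sp_zero hw).symm))

lemma sp_bound {n : ℕ} {w : Equiv.Perm ℤ} (hw : IsSignedPerm n w) {i : ℤ} (h1 : -(n:ℤ) ≤ i)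
    (h2 : i ≤ n) : -(n:ℤ) ≤ w i ∧ w i ≤ n := by
  by_contra hc
  have habs : (n:ℤ) < |w i| := by rw [lt_abs]; omega
  have h3 := hw.2 _ habs
  have hwi : w i = i := w.injective h3
  rw [hwi] at habs
  rw [lt_abs] at habs
  omega

def bfun (n : ℕ) (w : Equiv.Perm ℤ) (j : ℕ) : ℤ :=
  if j = 0 then -1 else if j = n + 1 then 0 else hmap (w (j:ℤ))

lemma bfun_zero (n : ℕ) (w : Equiv.Perm ℤ) : bfun n w 0 = -1 := by simp [bfun]

lemma bfun_last (n : ℕ) (w : Equiv.Perm ℤ) : bfun n w (n+1) = 0 := by simp [bfun]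

lemma bfun_mid (n : ℕ) (w : Equiv.Perm ℤ) {j : ℕ} (h1 : 1 ≤ j) (h2 : j ≤ n) :
    bfun n w j = hmap (w (j:ℤ)) := by
  unfold bfun
  rw [if_neg (by omega), if_neg (by omega)]

lemma bfun_bounds {n : ℕ} {w : Equiv.Perm ℤ} (hw : IsSignedPerm n w) (hn : 1 ≤ n) {j : ℕ}
    (hj : j ≤ n+1) : -(n:ℤ) ≤ bfun n w j ∧ bfun n w j ≤ (n:ℤ) - 1 := by
  unfold bfun
  split_ifs with e0 e1
  · constructor <;> omega
  · constructor <;> omega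
  · have hb := sp_bound hw (i := (j:ℤ)) (by omega) (by omega)
    have hne := sp_ne hw (i := (j:ℤ)) (by omega)
    simp only [hmap]
    split_ifs <;> omega

lemma cond_iff {n : ℕ} {w : Equiv.Perm ℤ} (hw : IsSignedPerm n w) (hn : 1 ≤ n)
    {i : ℤ} (hi : i ∈ insert (-1 : ℤ) (Finset.Icc (1:ℤ) (n:ℤ))) :
    ((if i = -1 then 2 ≤ w 1 else if i = (n:ℤ) then w (n:ℤ) ≤ -2 else Lll (w i) (w (i+1)))
      ↔ (bfun n w i.toNat + 2 ≤ bfun n w (i.toNat + 1))) := by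
  simp only [Finset.mem_insert, Finset.mem_Icc] at hi
  rcases hi with rfl | ⟨h1, h2⟩
  · rw [if_pos rfl]
    rw [show ((-1:ℤ)).toNat = 0 by omega]
    rw [bfun_zero]
    rw [show (0+1 : ℕ) = 1 from rfl]
    rw [bfun_mid n w (by omega) hn]
    rw [show (((1:ℕ)):ℤ) = 1 by norm_num]
    simp only [hmap]
    split_ifs <;> omega
  · by_cases hin : i = (n:ℤ)
    · subst hin
      rw [if_neg (by omega), if_pos rfl]
      rw [show ((n:ℤ)).toNat = n by omega]
      rw [bfun_mid n w hn le_rfl, bfun_last]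
      simp only [hmap]
      split_ifs <;> omega
    · rw [if_neg (by omega), if_neg hin]
      have e1 : ((i.toNat : ℕ) : ℤ) = i := by omega
      have e2 : ((i.toNat + 1 : ℕ) : ℤ) = i + 1 := by omega
      rw [bfun_mid n w (by omega) (by omega), bfun_mid n w (by omega) (by omega), e1, e2]
      exact lll_iff (sp_ne hw (by omega)) (sp_ne hw (by omega))

lemma basc_eq {n : ℕ} {w : Equiv.Perm ℤ} (hw : IsSignedPerm n w) (hn : 1 ≤ n) :
    basc n w
      = ((Finset.range (n+1)).filter fun i : ℕ => bfun n w i + 2 ≤ bfun n w (i+1)).card := by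
  unfold basc
  refine Finset.card_bij' (fun i _ => i.toNat) (fun j _ => if j = 0 then (-1 : ℤ) else (j:ℤ))
    ?_ ?_ ?_ ?_
  · intro a ha
    rw [Finset.mem_filter] at ha ⊢
    obtain ⟨ham, hac⟩ := ha
    refine ⟨?_, (cond_iff hw hn ham).mp hac⟩
    rw [Finset.mem_range]
    simp only [Finset.mem_insert, Finset.mem_Icc] at ham
    omega
  · intro j hj
    rw [Finset.mem_filter] at hj ⊢
    obtain ⟨hjm, hjc⟩ := hj
    rw [Finset.mem_range] at hjm
    have hmem : (if j = 0 then (-1:ℤ) else (j:ℤ)) ∈ insert (-1:ℤ) (Finset.Icc 1 (n:ℤ)) := by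
      simp only [Finset.mem_insert, Finset.mem_Icc]
      split_ifs with h0
      · left; rfl
      · right; omega
    refine ⟨hmem, (cond_iff hw hn hmem).mpr ?_⟩
    have he : (if j = 0 then (-1:ℤ) else (j:ℤ)).toNat = j := by split_ifs <;> omega
    rw [he]
    exact hjc
  · intro a ha
    rw [Finset.mem_filter] at ha
    simp only [Finset.mem_insert, Finset.mem_Icc] at ha
    rcases ha.1 with rfl | ⟨h1, h2⟩
    · rw [show ((-1:ℤ)).toNat = 0 by omega, if_pos rfl]
    · rw [if_neg (by omega)]; omega
  · intro j hj
    rw [Finset.mem_filter, Finset.mem_range] at hj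
    split_ifs with h0 <;> omega

lemma basc_zero_iff {n : ℕ} (hn : 1 ≤ n) (w : Equiv.Perm ℤ) :
    basc n w = 0 ↔ (¬ 2 ≤ w 1) ∧ (¬ w (n:ℤ) ≤ -2) ∧
      ∀ i : ℤ, 1 ≤ i → i ≤ (n:ℤ) - 1 → ¬ Lll (w i) (w (i+1)) := by
  unfold basc
  rw [Finset.card_eq_zero, Finset.filter_eq_empty_iff]
  constructor
  · intro h
    refine ⟨?_, ?_, ?_⟩
    · have := h (Finset.mem_insert_self _ _)
      rwa [if_pos rfl] at this
    · have hm : (n:ℤ) ∈ insert (-1:ℤ) (Finset.Icc 1 (n:ℤ)) := by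
        simp only [Finset.mem_insert, Finset.mem_Icc]; right; omega
      have := h hm
      rwa [if_neg (by omega), if_pos rfl] at this
    · intro i h1 h2 hL
      have hm : i ∈ insert (-1:ℤ) (Finset.Icc 1 (n:ℤ)) := by
        simp only [Finset.mem_insert, Finset.mem_Icc]; right; omega
      have := h hm
      rw [if_neg (by omega), if_neg (by omega)] at this
      exact this hL
  · rintro ⟨hA, hB, hC⟩ x hx
    simp only [Finset.mem_insert, Finset.mem_Icc] at hx
    rcases hx with rfl | ⟨hx1, hx2⟩
    · rwa [if_pos rfl]
    · by_cases hxn : x = (n:ℤ)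
      · rw [if_neg (by omega), if_pos hxn]; subst hxn; exact hB
      · rw [if_neg (by omega), if_neg hxn]; exact hC x hx1 (by omega)

def negrev (n : ℕ) : ℤ → ℤ := fun i =>
  if 1 ≤ i ∧ i ≤ (n:ℤ) then i - (n+1) else if -(n:ℤ) ≤ i ∧ i ≤ -1 then i + (n+1) else i

lemma negrev_inv (n : ℕ) : Function.Involutive (negrev n) := by
  intro i
  simp only [negrev]
  split_ifs <;> omega

noncomputable def vperm (n : ℕ) : Equiv.Perm ℤ := Function.Involutive.toPerm _ (negrev_inv n)

lemma vperm_apply (n : ℕ) (i : ℤ) : vperm n i = negrev n i := rfl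

lemma vperm_sp (n : ℕ) : IsSignedPerm n (vperm n) := by
  constructor
  · intro i
    show negrev n (-i) = - negrev n i
    simp only [negrev]
    split_ifs <;> omega
  · intro i hi
    rw [lt_abs] at hi
    show negrev n i = i
    simp only [negrev]
    split_ifs <;> omega

lemma sp_one (n : ℕ) : IsSignedPerm n (1 : Equiv.Perm ℤ) :=
  ⟨fun i => by simp, fun i _ => by simp⟩

lemma ext_from_pos {n : ℕ} {w u : Equiv.Perm ℤ} (hw : IsSignedPerm n w) (hu : IsSignedPerm n u)
    (h : ∀ i : ℤ, 1 ≤ i → i ≤ (n:ℤ) → w i = u i) : w = u := by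
  ext i
  rcases lt_trichotomy i 0 with hi | rfl | hi
  · by_cases hb : -(n:ℤ) ≤ i
    · have hpos := h (-i) (by omega) (by omega)
      have e1 := hw.1 (-i)
      have e2 := hu.1 (-i)
      simp only [neg_neg] at e1 e2
      omega
    · have habs : (n:ℤ) < |i| := by rw [lt_abs]; omega
      rw [hw.2 i habs, hu.2 i habs]
  · rw [sp_zero hw, sp_zero hu]
  · by_cases hb : i ≤ (n:ℤ)
    · exact h i hi hb
    · have habs : (n:ℤ) < |i| := by rw [lt_abs]; omega
      rw [hw.2 i habs, hu.2 i habs]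

lemma basc_one {n : ℕ} (hn : 1 ≤ n) : basc n (1 : Equiv.Perm ℤ) = 0 := by
  rw [basc_zero_iff hn]
  refine ⟨?_, ?_, ?_⟩
  · rw [Equiv.Perm.one_apply]; omega
  · rw [Equiv.Perm.one_apply]; omega
  · rintro i h1 h2 ⟨c, hc, l1, l2⟩
    simp only [Equiv.Perm.one_apply] at l1 l2
    omega

lemma basc_vperm {n : ℕ} (hn : 1 ≤ n) : basc n (vperm n) = 0 := by
  rw [basc_zero_iff hn]
  refine ⟨?_, ?_, ?_⟩
  · simp only [vperm_apply, negrev]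
    split_ifs <;> omega
  · simp only [vperm_apply, negrev]
    split_ifs <;> omega
  · intro i h1 h2
    simp only [vperm_apply, negrev]
    rintro ⟨c, hc, l1, l2⟩
    split_ifs at l1 l2 <;> omega

lemma basc_zero_cases {n : ℕ} (hn : 1 ≤ n) {w : Equiv.Perm ℤ} (hw : IsSignedPerm n w)
    (h0 : basc n w = 0) : w = 1 ∨ w = vperm n := by
  obtain ⟨hA, hB, hC⟩ := (basc_zero_iff hn w).mp h0
  set s := w.symm (n:ℤ) with hs
  have hws : w s = (n:ℤ) := w.apply_symm_apply _
  have hs0 : s ≠ 0 := by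
    intro h
    rw [h, sp_zero hw] at hws
    omega
  have hsb : -(n:ℤ) ≤ s ∧ s ≤ (n:ℤ) := by
    by_contra hcb
    have habs : (n:ℤ) < |s| := by rw [lt_abs]; omega
    have h2 := hw.2 s habs
    rw [h2] at hws
    rw [lt_abs] at habs
    omega
  obtain ⟨hsb1, hsb2⟩ := hsb
  rcases lt_or_gt_of_ne hs0 with hneg | hpos
  · right
    have hwt : w (-s) = -(n:ℤ) := by rw [hw.1 s, hws]
    have chainQ : ∀ k : ℕ, ∀ j : ℕ, j ≤ k → (j:ℤ) ≤ (n:ℤ) + s →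
        w (-s + (j:ℤ)) = -(n:ℤ) + (j:ℤ) := by
      intro k
      induction k with
      | zero =>
        intro j hj _
        rw [show j = 0 by omega]
        simpa using hwt
      | succ m IH =>
        intro j hj hjs
        rcases Nat.lt_or_ge j (m+1) with hlt | hge
        · exact IH j (by omega) hjs
        · have hjm : j = m + 1 := by omega
          subst hjm
          have hkz : (m:ℤ) + 1 ≤ (n:ℤ) + s := by push_cast at hjs; omega
          have hprev : w (-s + (m:ℤ)) = -(n:ℤ) + (m:ℤ) := IH m (by omega) (by omega)
          have hnl := hC (-s + (m:ℤ)) (by omega) (by omega)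
          rw [hprev] at hnl
          have hub : w (-s + (m:ℤ) + 1) ≤ -(n:ℤ) + (m:ℤ) + 1 := by
            by_contra hgt
            push_neg at hgt
            exact hnl ⟨-(n:ℤ) + (m:ℤ) + 1, by omega, by omega, by omega⟩
          have hlb : -(n:ℤ) ≤ w (-s + (m:ℤ) + 1) := (sp_bound hw (by omega) (by omega)).1
          have hge2 : -(n:ℤ) + (m:ℤ) + 1 ≤ w (-s + (m:ℤ) + 1) := by
            by_contra hlt2
            push_neg at hlt2
            set j' : ℕ := (w (-s + (m:ℤ) + 1) + (n:ℤ)).toNat with hj'def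
            have hj'z : (j':ℤ) = w (-s + (m:ℤ) + 1) + (n:ℤ) := by omega
            have hch := IH j' (by omega) (by omega)
            have heq : w (-s + (j':ℤ)) = w (-s + (m:ℤ) + 1) := by omega
            have := w.injective heq
            omega
          push_cast
          rw [show -s + ((m:ℤ) + 1) = -s + (m:ℤ) + 1 by ring]
          omega
    have hwn : w ((n:ℤ)) = s := by
      have hch := chainQ ((n:ℤ) + s).toNat ((n:ℤ) + s).toNat le_rfl (by omega)
      rw [show ((((n:ℤ) + s).toNat : ℕ) : ℤ) = (n:ℤ) + s by omega] at hch
      rw [show -s + ((n:ℤ) + s) = (n:ℤ) by ring] at hch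
      omega
    have hs1 : s = -1 := by omega
    refine ext_from_pos hw (vperm_sp n) ?_
    intro i h1 h2
    have hch := chainQ (i-1).toNat (i-1).toNat le_rfl (by omega)
    rw [show (((i-1).toNat : ℕ) : ℤ) = i - 1 by omega] at hch
    rw [hs1] at hch
    rw [show -(-1:ℤ) + (i - 1) = i by ring] at hch
    rw [hch, vperm_apply]
    simp only [negrev]
    rw [if_pos ⟨h1, h2⟩]
    ring
  · left
    have chainQ : ∀ k : ℕ, ∀ j : ℕ, j ≤ k → (j:ℤ) ≤ s - 1 →
        w (s - (j:ℤ)) = (n:ℤ) - (j:ℤ) := by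
      intro k
      induction k with
      | zero =>
        intro j hj _
        rw [show j = 0 by omega]
        simpa using hws
      | succ m IH =>
        intro j hj hjs
        rcases Nat.lt_or_ge j (m+1) with hlt | hge
        · exact IH j (by omega) hjs
        · have hjm : j = m + 1 := by omega
          subst hjm
          have hkz : (m:ℤ) + 1 ≤ s - 1 := by push_cast at hjs; omega
          have hprev : w (s - (m:ℤ)) = (n:ℤ) - (m:ℤ) := IH m (by omega) (by omega)
          have hnl := hC (s - (m:ℤ) - 1) (by omega) (by omega)
          rw [show s - (m:ℤ) - 1 + 1 = s - (m:ℤ) by ring, hprev] at hnl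
          have hgeq : (n:ℤ) - (m:ℤ) - 1 ≤ w (s - (m:ℤ) - 1) := by
            by_contra hlt2
            push_neg at hlt2
            exact hnl ⟨(n:ℤ) - (m:ℤ) - 1, by omega, by omega, by omega⟩
          have hle : w (s - (m:ℤ) - 1) ≤ (n:ℤ) := (sp_bound hw (by omega) (by omega)).2
          have hle2 : w (s - (m:ℤ) - 1) ≤ (n:ℤ) - (m:ℤ) - 1 := by
            by_contra hgt
            push_neg at hgt
            set j' : ℕ := ((n:ℤ) - w (s - (m:ℤ) - 1)).toNat with hj'def
            have hj'z : (j':ℤ) = (n:ℤ) - w (s - (m:ℤ) - 1) := by omega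
            have hch := IH j' (by omega) (by omega)
            have heq : w (s - (j':ℤ)) = w (s - (m:ℤ) - 1) := by omega
            have := w.injective heq
            omega
          push_cast
          rw [show s - ((m:ℤ) + 1) = s - (m:ℤ) - 1 by ring]
          omega
    have hw1 : w 1 = (n:ℤ) - (s - 1) := by
      have hch := chainQ (s-1).toNat (s-1).toNat le_rfl (by omega)
      rw [show (((s-1).toNat : ℕ) : ℤ) = s - 1 by omega] at hch
      rw [show s - (s - 1) = (1:ℤ) by ring] at hch
      omega
    have hsn : s = (n:ℤ) := by omega
    refine ext_from_pos hw (sp_one n) ?_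
    intro i h1 h2
    have hch := chainQ ((n:ℤ) - i).toNat ((n:ℤ) - i).toNat le_rfl (by omega)
    rw [show ((((n:ℤ) - i).toNat : ℕ) : ℤ) = (n:ℤ) - i by omega] at hch
    rw [hsn] at hch
    rw [show (n:ℤ) - ((n:ℤ) - i) = i by ring] at hch
    rw [hch]
    simp

end BRAM

/-- For every `n ≥ 1` and every signed permutation `w ∈ 𝔅_n`,
`0 ≤ basc(w) ≤ n - 1`; moreover exactly two signed permutations attain `basc(w) = 0`. -/
theorem basc_range_and_min (n : ℕ) (hn : 1 ≤ n) :
    (∀ w : Equiv.Perm ℤ, IsSignedPerm n w → basc n w ≤ n - 1) ∧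
    {w : Equiv.Perm ℤ | IsSignedPerm n w ∧ basc n w = 0}.ncard = 2 := by
  constructor
  · intro w hw
    by_contra hcb
    push_neg at hcb
    have hcon : n ≤ basc n w := by omega
    rw [BRAM.basc_eq hw hn] at hcon
    set S := (Finset.range (n+1)).filter
      (fun i : ℕ => BRAM.bfun n w i + 2 ≤ BRAM.bfun n w (i+1)) with hS
    set F := (Finset.range (n+1)).filter
      (fun i : ℕ => ¬ (BRAM.bfun n w i + 2 ≤ BRAM.bfun n w (i+1))) with hF
    have hcards : S.card + F.card = n + 1 := by
      rw [hS, hF, Finset.card_filter_add_card_filter_not, Finset.card_range]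
    have up : ∀ j : ℕ, j ≤ n + 1 →
        (∀ i : ℕ, i < j → BRAM.bfun n w i + 2 ≤ BRAM.bfun n w (i+1)) →
        2 * (j:ℤ) - 1 ≤ BRAM.bfun n w j := by
      intro j
      induction j with
      | zero => intro _ _; rw [BRAM.bfun_zero]; norm_num
      | succ m IH =>
        intro hj hasc
        have h1 := IH (by omega) (fun i hi => hasc i (by omega))
        have h2 := hasc m (by omega)
        push_cast at h1 ⊢
        omega
    have down : ∀ m : ℕ, m ≤ n + 1 →
        (∀ i : ℕ, n + 1 - m ≤ i → i ≤ n → BRAM.bfun n w i + 2 ≤ BRAM.bfun n w (i+1)) →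
        BRAM.bfun n w (n+1-m) ≤ -(2 * (m:ℤ)) := by
      intro m
      induction m with
      | zero => intro _ _; rw [Nat.sub_zero, BRAM.bfun_last]; norm_num
      | succ m IH =>
        intro hm hasc
        have h1 := IH (by omega) (fun i hi1 hi2 => hasc i (by omega) hi2)
        have h2 := hasc (n - m) (by omega) (by omega)
        rw [show n + 1 - m = (n - m) + 1 by omega] at h1
        rw [show n + 1 - (m+1) = n - m by omega]
        push_cast at h1 ⊢
        omega
    rcases Nat.lt_or_ge F.card 1 with hc0 | hc1
    · have hFe : F = ∅ := Finset.card_eq_zero.mp (by omega)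
      have hall : ∀ i : ℕ, i < n + 1 → BRAM.bfun n w i + 2 ≤ BRAM.bfun n w (i+1) := by
        intro i hi
        by_contra hni
        have hmem : i ∈ F := by
          rw [hF, Finset.mem_filter, Finset.mem_range]; exact ⟨hi, hni⟩
        rw [hFe] at hmem
        exact absurd hmem (Finset.notMem_empty i)
      have hfin := up (n+1) le_rfl hall
      rw [BRAM.bfun_last] at hfin
      push_cast at hfin
      omega
    · have hc1' : F.card = 1 := by omega
      obtain ⟨i0, hi0⟩ := Finset.card_eq_one.mp hc1'
      have hmem : i0 ∈ F := by rw [hi0]; exact Finset.mem_singleton_self i0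
      have hi0r : i0 < n + 1 := by
        rw [hF, Finset.mem_filter, Finset.mem_range] at hmem; exact hmem.1
      have hall : ∀ i : ℕ, i < n + 1 → i ≠ i0 →
          BRAM.bfun n w i + 2 ≤ BRAM.bfun n w (i+1) := by
        intro i h1 h2
        by_contra hni
        have hm2 : i ∈ F := by
          rw [hF, Finset.mem_filter, Finset.mem_range]; exact ⟨h1, hni⟩
        rw [hi0, Finset.mem_singleton] at hm2
        exact h2 hm2
      have hup := up i0 (by omega) (fun i hi => hall i (by omega) (by omega))
      have hdown := down (n - i0) (by omega) (fun i hi1 hi2 => hall i (by omega) (by omega))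
      rw [show n + 1 - (n - i0) = i0 + 1 by omega] at hdown
      have hb1 := BRAM.bfun_bounds hw hn (j := i0) (by omega)
      have hb2 := BRAM.bfun_bounds hw hn (j := i0+1) (by omega)
      rw [show (((n - i0 : ℕ)):ℤ) = (n:ℤ) - (i0:ℤ) by omega] at hdown
      obtain ⟨hb1a, hb1b⟩ := hb1
      obtain ⟨hb2a, hb2b⟩ := hb2
      have hbv1 : BRAM.bfun n w i0 = (n:ℤ) - 1 := by omega
      have hbv2 : BRAM.bfun n w (i0+1) = -(n:ℤ) := by omega
      have hn2 : (n:ℤ) = 2 * (i0:ℤ) := by omega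
      have hi01 : 1 ≤ i0 := by
        by_contra h0
        rw [show i0 = 0 by omega, BRAM.bfun_zero] at hbv1
        omega
      have hi0n : i0 + 1 ≤ n := by
        by_contra h0
        rw [show i0 + 1 = n + 1 by omega, BRAM.bfun_last] at hbv2
        omega
      rw [BRAM.bfun_mid n w hi01 (by omega)] at hbv1
      rw [BRAM.bfun_mid n w (by omega) hi0n] at hbv2
      have hne1 := BRAM.sp_ne hw (i := ((i0:ℕ):ℤ)) (by omega)
      have hbd1 := BRAM.sp_bound hw (i := ((i0:ℕ):ℤ)) (by omega) (by omega)
      have hw1 : w ((i0:ℕ):ℤ) = (n:ℤ) := by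
        simp only [BRAM.hmap] at hbv1; split_ifs at hbv1 <;> omega
      have hne2 := BRAM.sp_ne hw (i := (((i0+1:ℕ)):ℤ)) (by omega)
      have hbd2 := BRAM.sp_bound hw (i := (((i0+1:ℕ)):ℤ)) (by omega) (by omega)
      have hw2 : w (((i0+1:ℕ)):ℤ) = -(n:ℤ) := by
        simp only [BRAM.hmap] at hbv2; split_ifs at hbv2 <;> omega
      have hodd := hw.1 ((i0:ℕ):ℤ)
      rw [hw1] at hodd
      have heq : w (-((i0:ℕ):ℤ)) = w (((i0+1:ℕ)):ℤ) := by rw [hodd, hw2]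
      have hcontra := w.injective heq
      omega
  · have hset : {w : Equiv.Perm ℤ | IsSignedPerm n w ∧ basc n w = 0} = {1, BRAM.vperm n} := by
      ext w
      simp only [Set.mem_setOf_eq, Set.mem_insert_iff, Set.mem_singleton_iff]
      constructor
      · rintro ⟨hw, h0⟩
        exact BRAM.basc_zero_cases hn hw h0
      · rintro (rfl | rfl)
        · exact ⟨BRAM.sp_one n, BRAM.basc_one hn⟩
        · exact ⟨BRAM.vperm_sp n, BRAM.basc_vperm hn⟩
    rw [hset]
    refine Set.ncard_pair ?_
    intro h
    have h1 : BRAM.vperm n 1 = 1 - ((n:ℤ)+1) := by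
      rw [BRAM.vperm_apply]
      simp only [BRAM.negrev]
      rw [if_pos ⟨le_refl (1:ℤ), by omega⟩]
    rw [← h] at h1
    simp only [Equiv.Perm.one_apply] at h1
    omega
end
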